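/- arXiv:1704.02474 — 5 statements merged into one kernel-verified Lean document; each statement's English description precedes it below -/
import Mathlib

section
/- Every finite-dimensional division algebra over ℝ is isomorphic to ℝ, ℂ, or ℍ (Frobenius's theorem). -/
open Polynomial

set_option linter.unusedSectionVars false

section FrobeniusAux

variable {D : Type} [DivisionRing D] [Algebra ℝ D] [FiniteDimensional ℝ D]

lemma frob_expand_sq (x : D) (r : ℝ) :
    (x - algebraMap ℝ D r) ^ 2 = x ^ 2 - algebraMap ℝ D (2 * r) * x + algebraMap ℝ D (r ^ 2) := by
  have hx : x * algebraMap ℝ D r = algebraMap ℝ D r * x := (Algebra.commutes r x).symm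
  have h1 : (x - algebraMap ℝ D r) ^ 2
      = x * x - algebraMap ℝ D r * x - (algebraMap ℝ D r * x - algebraMap ℝ D r * algebraMap ℝ D r) := by
    rw [pow_two, sub_mul, mul_sub, mul_sub, hx]
  rw [h1]
  have h2 : algebraMap ℝ D (2 * r) * x = algebraMap ℝ D r * x + algebraMap ℝ D r * x := by
    rw [two_mul, map_add, add_mul]
  have h3 : algebraMap ℝ D (r ^ 2) = algebraMap ℝ D r * algebraMap ℝ D r := by
    rw [pow_two, map_mul]
  rw [h2, h3, pow_two]
  abel

lemma frob_key (x : D) : (∃ r : ℝ, x = algebraMap ℝ D r) ∨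
    (∃ r s : ℝ, s ≠ 0 ∧ (x - algebraMap ℝ D r) ^ 2 = algebraMap ℝ D (-(s ^ 2))) := by
  have hint : IsIntegral ℝ x := Algebra.IsIntegral.isIntegral x
  have hirr := minpoly.irreducible hint
  have hd2 : (minpoly ℝ x).natDegree ≤ 2 := hirr.natDegree_le_two
  have hd1 : 0 < (minpoly ℝ x).natDegree := minpoly.natDegree_pos hint
  have hmo : (minpoly ℝ x).Monic := minpoly.monic hint
  have haev := minpoly.aeval ℝ x
  interval_cases h : (minpoly ℝ x).natDegree
  · -- degree 1
    left
    have hp : minpoly ℝ x = X + C ((minpoly ℝ x).coeff 0) := hmo.eq_X_add_C h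
    rw [hp] at haev
    simp only [map_add, aeval_X, aeval_C] at haev
    exact ⟨-((minpoly ℝ x).coeff 0), by rw [map_neg]; exact eq_neg_of_add_eq_zero_left haev⟩
  · -- degree 2
    right
    set b := (minpoly ℝ x).coeff 1 with hb
    set c := (minpoly ℝ x).coeff 0 with hc
    have hp : minpoly ℝ x = X ^ 2 + C b * X + C c := by
      ext n
      rcases n with _ | _ | _ | n
      · simp [hc]
      · simp [hb]
      · have := hmo.coeff_natDegree
        rw [h] at this
        simpa using this
      · rw [coeff_eq_zero_of_natDegree_lt (by rw [h]; omega)]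
        simp [coeff_X_pow]
    rw [hp] at haev
    simp only [map_add, map_mul, map_pow, aeval_X, aeval_C] at haev
    have hdisc : b ^ 2 - 4 * c < 0 := by
      by_contra hge
      push_neg at hge
      set t : ℝ := (-b + Real.sqrt (b ^ 2 - 4 * c)) / 2 with ht
      have hs : Real.sqrt (b ^ 2 - 4 * c) ^ 2 = b ^ 2 - 4 * c := Real.sq_sqrt hge
      have hroot : (minpoly ℝ x).IsRoot t := by
        rw [hp]
        simp only [IsRoot, eval_add, eval_mul, eval_pow, eval_X, eval_C]
        rw [ht]; nlinarith [hs]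
      obtain ⟨q, hq⟩ := dvd_iff_isRoot.mpr hroot
      have hq0 : q ≠ 0 := by
        rintro rfl
        rw [mul_zero] at hq
        exact minpoly.ne_zero hint hq
      rcases hirr.isUnit_or_isUnit hq with hu | hu
      · exact (not_isUnit_X_sub_C t) hu
      · have hnd := congrArg natDegree hq
        rw [natDegree_mul (X_sub_C_ne_zero t) hq0, natDegree_X_sub_C,
          natDegree_eq_zero_of_isUnit hu, h] at hnd
        omega
    refine ⟨-(b / 2), Real.sqrt (c - b ^ 2 / 4), Real.sqrt_ne_zero'.mpr (by linarith), ?_⟩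
    rw [frob_expand_sq]
    have hs2 : Real.sqrt (c - b ^ 2 / 4) ^ 2 = c - b ^ 2 / 4 := Real.sq_sqrt (by linarith)
    rw [hs2]
    have : (2 : ℝ) * -(b / 2) = -b := by ring
    rw [this, map_neg, neg_mul, sub_neg_eq_add]
    have h4 : -(c - b ^ 2 / 4) = -c + (-(b / 2)) ^ 2 := by ring
    rw [h4, map_add, map_neg, eq_neg_of_add_eq_zero_left haev]

lemma frob_unit {x : D} {r s : ℝ} (hs : s ≠ 0)
    (h : (x - algebraMap ℝ D r) ^ 2 = algebraMap ℝ D (-(s ^ 2))) :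
    (s⁻¹ • (x - algebraMap ℝ D r)) * (s⁻¹ • (x - algebraMap ℝ D r)) = -1 ∧
      x = algebraMap ℝ D r + algebraMap ℝ D s * (s⁻¹ • (x - algebraMap ℝ D r)) := by
  constructor
  · rw [smul_mul_smul_comm]
    rw [show (x - algebraMap ℝ D r) * (x - algebraMap ℝ D r) = (x - algebraMap ℝ D r) ^ 2
      from (pow_two _).symm, h, Algebra.smul_def, ← map_mul]
    rw [show s⁻¹ * s⁻¹ * -s ^ 2 = -1 by field_simp]
    simp
  · rw [← Algebra.smul_def, smul_smul, mul_inv_cancel₀ hs, one_smul]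
    abel

lemma frob_centralizer {i : D} (hi : i * i = -1) {x : D}
    (hkey : (∃ r : ℝ, x = algebraMap ℝ D r) ∨
      (∃ r s : ℝ, s ≠ 0 ∧ (x - algebraMap ℝ D r) ^ 2 = algebraMap ℝ D (-(s ^ 2))))
    (hx : i * x = x * i) :
    ∃ a b : ℝ, x = algebraMap ℝ D a + algebraMap ℝ D b * i := by
  rcases hkey with ⟨r, rfl⟩ | ⟨r, s, hs, h⟩
  · exact ⟨r, 0, by simp⟩
  · obtain ⟨hu2, hxu⟩ := frob_unit hs h
    set u := s⁻¹ • (x - algebraMap ℝ D r) with hu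
    have hcomm : i * u = u * i := by
      rw [hu, mul_smul_comm, smul_mul_assoc, mul_sub, sub_mul, hx, Algebra.commutes]
    have h0 : (u - i) * (u + i) = 0 := by
      rw [sub_mul, mul_add, mul_add, hu2, hi, hcomm]
      abel
    rcases mul_eq_zero.mp h0 with h1 | h1
    · have : u = i := by rwa [sub_eq_zero] at h1
      exact ⟨r, s, by rw [hxu, this]⟩
    · have : u = -i := by rwa [add_eq_zero_iff_eq_neg] at h1
      exact ⟨r, -s, by rw [hxu, this, map_neg, neg_mul, mul_neg]⟩

end FrobeniusAux

/-- **Frobenius's theorem**: every finite-dimensional division algebra over `ℝ` is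
isomorphic (as an `ℝ`-algebra) to `ℝ`, `ℂ`, or the Hamilton quaternions `ℍ`. -/
theorem frobenius_real_division_algebra (D : Type) [DivisionRing D] [Algebra ℝ D]
    [FiniteDimensional ℝ D] :
    Nonempty (D ≃ₐ[ℝ] ℝ) ∨ Nonempty (D ≃ₐ[ℝ] ℂ) ∨ Nonempty (D ≃ₐ[ℝ] Quaternion ℝ) := by
  by_cases hreal : ∀ x : D, ∃ r : ℝ, x = algebraMap ℝ D r
  · left
    refine ⟨(AlgEquiv.ofBijective (Algebra.ofId ℝ D) ⟨fun a b hab => ?_, fun x => ?_⟩).symm⟩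
    · exact (algebraMap ℝ D).injective hab
    · obtain ⟨r, hr⟩ := hreal x
      exact ⟨r, hr.symm⟩
  · push_neg at hreal
    obtain ⟨x, hx⟩ := hreal
    obtain ⟨r, s, hs, hsq⟩ := (frob_key x).resolve_left (by rintro ⟨r, hr⟩; exact hx r hr)
    set i : D := s⁻¹ • (x - algebraMap ℝ D r) with hidef
    have hi : i * i = -1 := (frob_unit hs hsq).1
    have hi0 : i ≠ 0 := by
      intro h0
      rw [h0, mul_zero, eq_comm, neg_eq_zero] at hi
      exact one_ne_zero hi
    have hL : ∀ y : D, i * (i * y) = -y := fun y => by rw [← mul_assoc, hi, neg_one_mul]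
    have hR : ∀ y : D, y * i * i = -y := fun y => by rw [mul_assoc, hi, mul_neg_one]
    have hcen : ∀ y : D, i * y = y * i →
        ∃ a b : ℝ, y = algebraMap ℝ D a + algebraMap ℝ D b * i :=
      fun y hy => frob_centralizer hi (frob_key y) hy
    have hmap0 : ∀ c : ℝ, algebraMap ℝ D c = 0 → c = 0 := fun c hc =>
      (algebraMap ℝ D).injective (by rw [hc, map_zero])
    by_cases hcomm : ∀ d : D, i * d = d * i
    · right; left
      refine ⟨(AlgEquiv.ofBijective (Complex.liftAux i hi) ⟨?_, fun d => ?_⟩).symm⟩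
      · exact (Complex.liftAux i hi).toRingHom.injective
      · obtain ⟨a, b, hd⟩ := hcen d (hcomm d)
        exact ⟨⟨a, b⟩, by rw [Complex.liftAux_apply, Algebra.smul_def]; exact hd.symm⟩
    · push_neg at hcomm
      obtain ⟨d₀, hd₀⟩ := hcomm
      right; right
      -- the anticommuting part of d₀
      set w : D := d₀ + i * d₀ * i with hwdef
      have hiw : i * w = i * d₀ - d₀ * i := by
        rw [hwdef, mul_add, mul_assoc i d₀ i, hL (d₀ * i), ← sub_eq_add_neg]
      have hwi : w * i = d₀ * i - i * d₀ := by
        rw [hwdef, add_mul, hR (i * d₀), ← sub_eq_add_neg]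
      have hanti : i * w = -(w * i) := by rw [hiw, hwi]; abel
      have hw0 : w ≠ 0 := by
        intro h0
        apply hd₀
        have h1 : i * w = 0 := by rw [h0, mul_zero]
        rw [hiw, sub_eq_zero] at h1
        exact h1
      have hwi0 : w * i ≠ 0 := fun h => hw0 (by
        have := congrArg (· * i) h
        simpa [mul_assoc, hi] using this)
      -- general: anything anticommuting with i, times anything anticommuting, commutes… here w*w
      have hww : i * (w * w) = (w * w) * i := by
        rw [← mul_assoc, hanti, neg_mul, mul_assoc, hanti, mul_neg, neg_neg, ← mul_assoc]
      obtain ⟨a, b, hab⟩ := hcen (w * w) hww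
      -- b = 0
      have hb : b = 0 := by
        have lhs : w * (w * w) = algebraMap ℝ D a * w + algebraMap ℝ D b * (w * i) := by
          rw [hab, mul_add, ← Algebra.commutes a w, ← mul_assoc, ← Algebra.commutes b w,
            mul_assoc]
        have rhs : (w * w) * w = algebraMap ℝ D a * w + algebraMap ℝ D b * (i * w) := by
          rw [hab, add_mul, mul_assoc]
        have h1 : algebraMap ℝ D a * w + algebraMap ℝ D b * (w * i)
            = algebraMap ℝ D a * w + algebraMap ℝ D b * (i * w) := by
          rw [← lhs, ← rhs, mul_assoc]
        have h1' := add_left_cancel h1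
        rw [hanti, mul_neg] at h1'
        have h2 : (2 : ℝ) • (algebraMap ℝ D b * (w * i)) = 0 := by
          rw [two_smul]
          nth_rewrite 2 [h1']
          rw [add_neg_cancel]
        rcases smul_eq_zero.mp h2 with h3 | h3
        · norm_num at h3
        · rcases mul_eq_zero.mp h3 with h4 | h4
          · exact hmap0 b h4
          · exact absurd h4 hwi0
      -- w is not "real"
      have hwnr : ∀ t : ℝ, w ≠ algebraMap ℝ D t := by
        intro t h0
        apply hwi0
        have h1 : i * w = w * i := by rw [h0, Algebra.commutes]
        rw [hanti, eq_comm, eq_neg_iff_add_eq_zero] at h1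
        have h2 : (2 : ℝ) • (w * i) = 0 := by rw [two_smul]; exact h1
        rcases smul_eq_zero.mp h2 with h3 | h3
        · norm_num at h3
        · exact h3
      obtain ⟨r', s', hs', hsq'⟩ :=
        (frob_key w).resolve_left (by rintro ⟨t, ht⟩; exact hwnr t ht)
      have haba : w * w = algebraMap ℝ D a := by rw [hab, hb, map_zero, zero_mul, add_zero]
      -- r' = 0
      have hr0 : r' = 0 := by
        by_contra hr
        apply hwnr ((a + r' ^ 2 + s' ^ 2) / (2 * r'))
        have h1 := hsq'
        rw [frob_expand_sq, pow_two, haba, map_neg] at h1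
        -- h1 : e a - e (2r') * w + e (r'^2) = -(e (s'^2))
        have h2 : algebraMap ℝ D (2 * r') * w
            = algebraMap ℝ D a + algebraMap ℝ D (r' ^ 2) + algebraMap ℝ D (s' ^ 2) := by
          calc algebraMap ℝ D (2 * r') * w
              = -(algebraMap ℝ D (s' ^ 2))
                + (algebraMap ℝ D (2 * r') * w + algebraMap ℝ D (s' ^ 2)) := by abel
            _ = (algebraMap ℝ D a - algebraMap ℝ D (2 * r') * w + algebraMap ℝ D (r' ^ 2))
                + (algebraMap ℝ D (2 * r') * w + algebraMap ℝ D (s' ^ 2)) := by rw [h1]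
            _ = algebraMap ℝ D a + algebraMap ℝ D (r' ^ 2) + algebraMap ℝ D (s' ^ 2) := by abel
        have h2r : (2 : ℝ) * r' ≠ 0 := mul_ne_zero two_ne_zero hr
        rw [div_eq_inv_mul, map_mul, map_inv₀]
        refine (eq_inv_mul_iff_mul_eq₀ (fun hc => h2r (hmap0 _ hc))).mpr ?_
        rw [map_add, map_add]
        exact h2
      -- so w^2 = -(s'^2); normalize to j
      rw [hr0, map_zero, sub_zero] at hsq'
      have hj2 : w * w = -(algebraMap ℝ D (s' ^ 2)) := by
        rw [← pow_two, hsq', map_neg]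
      set j : D := s'⁻¹ • w with hjdef
      have hj : j * j = -1 := by
        rw [hjdef, smul_mul_smul_comm, hj2, smul_neg, Algebra.smul_def, ← map_mul,
          show s'⁻¹ * s'⁻¹ * s' ^ 2 = 1 by field_simp, map_one]
      have hj0 : j ≠ 0 := by
        intro h0
        rw [h0, mul_zero, eq_comm, neg_eq_zero] at hj
        exact one_ne_zero hj
      have hijanti : i * j = -(j * i) := by
        rw [hjdef, mul_smul_comm s'⁻¹ i w, smul_mul_assoc s'⁻¹ w i, hanti, smul_neg]
      -- quaternion basis
      let B : QuaternionAlgebra.Basis D (-1 : ℝ) (0 : ℝ) (-1 : ℝ) :=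
        { i := i, j := j, k := i * j
          i_mul_i := by rw [hi, zero_smul, add_zero, neg_smul, one_smul]
          j_mul_j := by rw [hj, neg_smul, one_smul]
          i_mul_j := rfl
          j_mul_i := by rw [zero_smul, zero_sub, ← neg_eq_iff_eq_neg.mpr hijanti] }
      have hjR : ∀ y : D, y * j * j = -y := fun y => by rw [mul_assoc, hj, mul_neg_one]
      let φ : Quaternion ℝ →ₐ[ℝ] D := B.liftHom
      refine ⟨(AlgEquiv.ofBijective φ ⟨?_, fun d => ?_⟩).symm⟩
      · exact φ.toRingHom.injective
      · -- surjectivity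
        set p : D := d - i * d * i with hpdef
        set q : D := d + i * d * i with hqdef
        have hip : i * p = p * i := by
          rw [hpdef, mul_sub, sub_mul, hR (i * d), mul_assoc i d i, hL (d * i),
            sub_neg_eq_add, sub_neg_eq_add, add_comm]
        have hiq : i * q = -(q * i) := by
          rw [hqdef, mul_add, add_mul, hR (i * d), mul_assoc i d i, hL (d * i)]
          abel
        obtain ⟨a₁, b₁, hp1⟩ := hcen p hip
        have hqj : i * (q * j) = (q * j) * i := by
          rw [← mul_assoc, hiq, neg_mul, mul_assoc, hijanti, mul_neg, neg_neg, ← mul_assoc]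
        obtain ⟨a₂, b₂, hqj2⟩ := hcen (q * j) hqj
        have hq2 : q = -(algebraMap ℝ D a₂ * j) - algebraMap ℝ D b₂ * (i * j) := by
          have h1 : q * j * j = (algebraMap ℝ D a₂ + algebraMap ℝ D b₂ * i) * j := by
            rw [← hqj2]
          rw [hjR q, add_mul, mul_assoc] at h1
          have h2 := congrArg (fun z : D => -z) h1
          simp only [neg_neg, neg_add] at h2
          rw [h2]
          abel
        have hd2 : (2 : ℝ) • d = p + q := by
          rw [hpdef, hqdef, two_smul]
          abel
        refine ⟨⟨a₁ / 2, b₁ / 2, -a₂ / 2, -b₂ / 2⟩, ?_⟩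
        apply smul_right_injective D (two_ne_zero (α := ℝ))
        show (2 : ℝ) • (φ ⟨a₁ / 2, b₁ / 2, -a₂ / 2, -b₂ / 2⟩) = (2 : ℝ) • d
        have hφ : φ ⟨a₁ / 2, b₁ / 2, -a₂ / 2, -b₂ / 2⟩
            = algebraMap ℝ D (a₁ / 2) + (b₁ / 2) • i + (-a₂ / 2) • j + (-b₂ / 2) • (i * j) :=
          rfl
        clear_value i j
        rw [hφ, hd2]
        rw [smul_add, smul_add, smul_add, smul_smul, smul_smul, smul_smul]
        have e1 : (2 : ℝ) • algebraMap ℝ D (a₁ / 2) = algebraMap ℝ D a₁ := by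
          rw [Algebra.smul_def, ← map_mul]
          congr 1
          ring
        have e2 : (2 : ℝ) * (b₁ / 2) = b₁ := by ring
        have e3 : (2 : ℝ) * (-a₂ / 2) = -a₂ := by ring
        have e4 : (2 : ℝ) * (-b₂ / 2) = -b₂ := by ring
        rw [e1, e2, e3, e4]
        rw [hp1, hq2, neg_smul, neg_smul, Algebra.smul_def b₁ i,
          Algebra.smul_def a₂ j, Algebra.smul_def b₂ (i * j)]
        abel
end

section
/- If A is a finite-dimensional simple algebra over ℝ, then A is isomorphic to a matrix algebra Mₙ(ℝ), Mₙ(ℂ), or Mₙ(ℍ) for some n ≥ 1. -/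
open Module

/-- Any finite-dimensional field extension of ℝ has dimension at most 2. -/
theorem aux_finrank_le_two (K : Type*) [Field K] [Algebra ℝ K] [FiniteDimensional ℝ K] :
    finrank ℝ K ≤ 2 := by
  let f : K →ₐ[ℝ] ℂ := IsAlgClosed.lift
  have hinj : Function.Injective f := f.toRingHom.injective
  calc finrank ℝ K ≤ finrank ℝ ℂ := LinearMap.finrank_le_finrank_of_injective (f := f.toLinearMap) hinj
  _ = 2 := Complex.finrank_real_complex

/-- In a f.d. real division algebra, any pair of commuting elements generates a subalgebra
in which the analysis can be done; key output: quadratic relation. -/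
theorem aux_quad {E : Type*} [DivisionRing E] [Algebra ℝ E] [FiniteDimensional ℝ E]
    (x : E) : ∃ a b : ℝ, x * x = a • x + b • (1 : E) := by
  set F := Algebra.adjoin ℝ ({x} : Set E) with hF
  letI : CommRing F := Algebra.adjoinCommRingOfComm ℝ (by rintro a rfl b rfl; rfl)
  have hfield : IsField F := by
    have := (Algebra.IsIntegral.isField_iff_isField (R := ℝ) (S := F)
      (algebraMap ℝ F).injective).mp (Field.toIsField ℝ)
    exact this
  letI : Field F := hfield.toField
  have hr2 : finrank ℝ F ≤ 2 := aux_finrank_le_two F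
  set x' : F := ⟨x, Algebra.self_mem_adjoin_singleton ℝ x⟩ with hx'
  have hdep : ¬ LinearIndependent ℝ ![(1 : F), x', x' * x'] := by
    intro h
    have := h.fintype_card_le_finrank
    simp at this
    omega
  rw [Fintype.not_linearIndependent_iff] at hdep
  obtain ⟨g, hg, i, hi⟩ := hdep
  have hgE : g 0 • (1 : E) + g 1 • x + g 2 • (x * x) = 0 := by
    have := congrArg (Subtype.val) hg
    simpa [Fin.sum_univ_three] using this
  by_cases h2 : g 2 = 0
  · have h01 : g 0 • (1 : E) + g 1 • x = 0 := by simpa [h2] using hgE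
    have h1 : g 1 ≠ 0 := by
      intro h1
      have : g 0 • (1 : E) = 0 := by simpa [h1] using h01
      rcases smul_eq_zero.mp this with h | h
      · fin_cases i <;> simp_all
      · exact one_ne_zero h
    have hgx : g 1 • x = (-(g 0)) • (1 : E) := by
      linear_combination (norm := module) h01
    have hx : x = ((g 1)⁻¹ * -(g 0)) • (1 : E) := by
      rw [← smul_smul, ← hgx, smul_smul, inv_mul_cancel₀ h1, one_smul]
    refine ⟨(g 1)⁻¹ * -(g 0), 0, ?_⟩
    rw [hx]
    simp [smul_mul_assoc]
  · refine ⟨-(g 2)⁻¹ * g 1, -(g 2)⁻¹ * g 0, ?_⟩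
    have h' : (g 2)⁻¹ • (g 0 • (1 : E) + g 1 • x + g 2 • (x * x)) = 0 := by
      rw [hgE, smul_zero]
    rw [smul_add, smul_add, smul_smul, smul_smul, smul_smul, inv_mul_cancel₀ h2, one_smul] at h'
    rw [neg_mul, neg_mul, neg_smul, neg_smul]
    linear_combination (norm := module) h' 

theorem aux_exists_i {E : Type*} [DivisionRing E] [Algebra ℝ E] [FiniteDimensional ℝ E]
    {x : E} (hx : x ∉ Set.range (algebraMap ℝ E)) :
    ∃ i : E, i * i = -1 := by
  obtain ⟨a, b, hab⟩ := aux_quad x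
  have hd : a ^ 2 + 4 * b < 0 := by
    by_contra hge
    push_neg at hge
    set s := Real.sqrt (a ^ 2 + 4 * b) with hs_def
    have hs : s ^ 2 = a ^ 2 + 4 * b := Real.sq_sqrt hge
    have hfac : (x - ((a + s) / 2) • 1) * (x - ((a - s) / 2) • 1) = 0 := by
      have expand : (x - ((a + s) / 2) • 1) * (x - ((a - s) / 2) • 1)
          = x * x - ((a - s) / 2) • x - ((a + s) / 2) • x + (((a + s) / 2) * ((a - s) / 2)) • 1 := by
        simp only [sub_mul, mul_sub, smul_mul_assoc, mul_smul_comm, smul_mul_smul_comm,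
          one_mul, mul_one, smul_sub]
        module
      rw [expand, hab]
      match_scalars
      · ring
      · linear_combination (-1/4 : ℝ) * hs
    rcases mul_eq_zero.mp hfac with h | h
    · exact hx ⟨(a + s) / 2, by rw [Algebra.algebraMap_eq_smul_one]; linear_combination (norm := module) -h⟩
    · exact hx ⟨(a - s) / 2, by rw [Algebra.algebraMap_eq_smul_one]; linear_combination (norm := module) -h⟩
  set t := Real.sqrt (-(a ^ 2 + 4 * b)) with ht_def
  have ht : t ^ 2 = -(a ^ 2 + 4 * b) := Real.sq_sqrt (by linarith)
  have htne : t ≠ 0 := ne_of_gt (Real.sqrt_pos.mpr (by linarith))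
  refine ⟨t⁻¹ • ((2 : ℝ) • x - a • 1), ?_⟩
  rw [smul_mul_smul_comm]
  have expand : ((2 : ℝ) • x - a • 1) * ((2 : ℝ) • x - a • 1)
      = (4 : ℝ) • (x * x) - (2 * a) • x - (2 * a) • x + (a * a) • 1 := by
    simp only [sub_mul, mul_sub, smul_mul_assoc, mul_smul_comm, smul_mul_smul_comm,
      one_mul, mul_one, smul_smul]
    match_scalars <;> ring
  rw [expand, hab, show (-1 : E) = (-1 : ℝ) • (1 : E) by simp]
  match_scalars
  · ring
  · field_simp
    linarith [ht]

theorem aux_centralizer {E : Type*} [DivisionRing E] [Algebra ℝ E] [FiniteDimensional ℝ E]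
    {i : E} (hi : i * i = -1) {z : E} (hz : i * z = z * i) :
    z ∈ Submodule.span ℝ ({1, i} : Set E) := by
  set F := Algebra.adjoin ℝ ({i, z} : Set E) with hF
  letI : CommRing F := Algebra.adjoinCommRingOfComm ℝ (by
    intro u hu v hv
    rcases (by simpa using hu : u = i ∨ u = z) with hu' | hu' <;>
      rcases (by simpa using hv : v = i ∨ v = z) with hv' | hv' <;>
        rw [hu', hv'] <;> first | rfl | exact hz | exact hz.symm)
  have hfield : IsField F :=
    (Algebra.IsIntegral.isField_iff_isField (R := ℝ) (S := F)
      (algebraMap ℝ F).injective).mp (Field.toIsField ℝ)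
  letI : Field F := hfield.toField
  have hr2 : Module.finrank ℝ F ≤ 2 := aux_finrank_le_two F
  have hiF : i ∈ F := Algebra.subset_adjoin (by simp)
  have hzF : z ∈ F := Algebra.subset_adjoin (by simp)
  set i' : F := ⟨i, hiF⟩ with hi'
  have hind : LinearIndependent ℝ ![(1 : F), i'] := by
    rw [LinearIndependent.pair_iff]
    intro s u hsu
    have hE : s • (1 : E) + u • i = 0 := by
      have := congrArg Subtype.val hsu
      simpa using this
    have hu : u = 0 := by
      by_contra hu
      have hiE : i = (u⁻¹ * -s) • (1 : E) := by
        have h2 : u • i = (-s) • (1 : E) := by linear_combination (norm := module) hE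
        rw [← smul_smul, ← h2, smul_smul, inv_mul_cancel₀ hu, one_smul]
      have : ((u⁻¹ * -s) * (u⁻¹ * -s)) • (1 : E) = -1 := by
        rw [← hi]
        conv_rhs => rw [hiE]
        rw [smul_mul_smul_comm, one_mul]
      have h1 : ((u⁻¹ * -s) * (u⁻¹ * -s) + 1) • (1 : E) = 0 := by
        rw [add_smul, this, one_smul]; abel
      rcases smul_eq_zero.mp h1 with h | h
      · nlinarith [sq_nonneg (u⁻¹ * -s), sq (u⁻¹*-s) ▸ h]
      · exact one_ne_zero h
    have hs : s = 0 := by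
      rw [hu, zero_smul, add_zero] at hE
      rcases smul_eq_zero.mp hE with h | h
      · exact h
      · exact absurd h one_ne_zero
    exact ⟨hs, hu⟩
  have hcard : 2 ≤ Module.finrank ℝ F := by
    simpa using hind.fintype_card_le_finrank
  have hrank : Module.finrank ℝ F = 2 := le_antisymm hr2 hcard
  have hspan_top : Submodule.span ℝ (Set.range ![(1 : F), i']) = ⊤ := by
    apply Submodule.eq_top_of_finrank_eq
    rw [finrank_span_eq_card hind, hrank]; simp
  have hz' : (⟨z, hzF⟩ : F) ∈ Submodule.span ℝ (Set.range ![(1 : F), i']) := by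
    rw [hspan_top]; trivial
  have : z ∈ Submodule.map F.val.toLinearMap (Submodule.span ℝ (Set.range ![(1 : F), i'])) :=
    ⟨⟨z, hzF⟩, hz', rfl⟩
  rw [Submodule.map_span] at this
  have hset : ({1, i} : Set E) = ⇑F.val.toLinearMap '' Set.range ![(1 : F), i'] := by
    rw [Matrix.range_cons_cons_empty, Set.image_pair]
    simp [i']
  rw [hset]; exact this

theorem frobenius_division_algebra (E : Type*) [DivisionRing E] [Algebra ℝ E]
    [FiniteDimensional ℝ E] :
    Nonempty (E ≃ₐ[ℝ] ℝ) ∨ Nonempty (E ≃ₐ[ℝ] ℂ) ∨ Nonempty (E ≃ₐ[ℝ] Quaternion ℝ) := by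
  by_cases hsur : Function.Surjective (algebraMap ℝ E)
  · left
    exact ⟨(AlgEquiv.ofBijective (Algebra.ofId ℝ E)
      ⟨(algebraMap ℝ E).injective, hsur⟩).symm⟩
  · obtain ⟨x, hx⟩ : ∃ x : E, x ∉ Set.range (algebraMap ℝ E) := by
      by_contra h
      push_neg at h
      exact hsur fun y => h y
    obtain ⟨i, hi⟩ := aux_exists_i hx
    have hine : i ≠ 0 := by
      intro h
      rw [h, mul_zero] at hi
      exact (neg_ne_zero.mpr (one_ne_zero : (1:E) ≠ 0)) hi.symm
    by_cases hcomm : ∀ z : E, i * z = z * i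
    · right; left
      set f := Complex.liftAux i hi with hf
      have hsurj : Function.Surjective f := by
        intro z
        have hz : z ∈ Submodule.span ℝ ({1, i} : Set E) := aux_centralizer hi (hcomm z)
        have hle : Submodule.span ℝ ({1, i} : Set E) ≤ Subalgebra.toSubmodule f.range := by
          rw [Submodule.span_le]
          rintro w hw
          rcases (by simpa using hw : w = 1 ∨ w = i) with h' | h'
          · exact ⟨1, by rw [h']; exact map_one f⟩
          · exact ⟨Complex.I, by rw [h']; exact Complex.liftAux_apply_I i hi⟩
        exact hle hz
      exact ⟨(AlgEquiv.ofBijective f ⟨f.toRingHom.injective, hsurj⟩).symm⟩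
    · right; right
      push_neg at hcomm
      obtain ⟨z₀, hz₀⟩ := hcomm
      have key1 : ∀ y : E, i * (i * y * i) = -(y * i) := fun y => by
        rw [show i * (i * y * i) = ((i * i) * y) * i by noncomm_ring, hi, neg_one_mul, neg_mul]
      have key2 : ∀ y : E, (i * y * i) * i = -(i * y) := fun y => by
        rw [show (i * y * i) * i = (i * y) * (i * i) by noncomm_ring, hi, mul_neg_one]
      have hone_comm : ∀ r : ℝ, i * (r • (1:E)) = (r • (1:E)) * i := fun r => by
        rw [mul_smul_comm, smul_mul_assoc, mul_one, one_mul]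
      obtain ⟨w, hw⟩ : ∃ w : E, w = z₀ + i * z₀ * i := ⟨_, rfl⟩
      have h1 : i * w = i * z₀ - z₀ * i := by
        rw [hw, mul_add, key1, ← sub_eq_add_neg]
      have h2 : w * i = z₀ * i - i * z₀ := by
        rw [hw, add_mul, key2, ← sub_eq_add_neg]
      have hwa : i * w = -(w * i) := by rw [h1, h2]; abel
      have hwne : w ≠ 0 := by
        intro h0
        apply hz₀
        rw [h0, mul_zero] at h1
        exact (sub_eq_zero.mp h1.symm)
      have hww : i * (w * w) = (w * w) * i := by
        calc i * (w * w) = (i * w) * w := (mul_assoc i w w).symm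
        _ = -((w * i) * w) := by rw [hwa, neg_mul]
        _ = -(w * (i * w)) := by rw [mul_assoc]
        _ = -(w * (-(w * i))) := by rw [hwa]
        _ = (w * w) * i := by rw [mul_neg, neg_neg, ← mul_assoc]
      obtain ⟨a, c, hac⟩ := Submodule.mem_span_pair.mp (aux_centralizer hi hww)
      have hc : c = 0 := by
        by_contra hcne
        have h3 : w * (a • (1:E) + c • i) = (a • (1:E) + c • i) * w := by
          rw [hac, ← mul_assoc]
        simp only [mul_add, add_mul, mul_smul_comm, smul_mul_assoc, mul_one, one_mul] at h3
        have h4 : c • (w * i) = c • (i * w) := add_left_cancel h3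
        rw [hwa, smul_neg] at h4
        have h5 : (2:ℝ) • (c • (w * i)) = 0 := by
          rw [two_smul]
          nth_rewrite 2 [h4]
          exact add_neg_cancel _
        rcases smul_eq_zero.mp h5 with h | h
        · norm_num at h
        · rcases smul_eq_zero.mp h with h | h
          · exact hcne h
          · rcases mul_eq_zero.mp h with h | h
            · exact hwne h
            · exact hine h
      have hww2 : w * w = a • (1:E) := by rw [← hac, hc]; simp
      have hia : ∀ r : ℝ, w = r • (1:E) → False := by
        intro r hwv
        have hcomm' : i * w = w * i := by rw [hwv]; exact hone_comm r
        rw [hwa] at hcomm'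
        have h6 : (2:ℝ) • (w * i) = 0 := by
          rw [two_smul]
          nth_rewrite 1 [← hcomm']
          exact neg_add_cancel _
        rcases smul_eq_zero.mp h6 with h | h
        · norm_num at h
        · rcases mul_eq_zero.mp h with h | h
          · exact hwne h
          · exact hine h
      have ha : a < 0 := by
        by_contra hge
        push_neg at hge
        have hs : Real.sqrt a ^ 2 = a := Real.sq_sqrt hge
        have hfac : (w - Real.sqrt a • 1) * (w + Real.sqrt a • 1) = 0 := by
          simp only [mul_add, sub_mul, smul_mul_assoc, mul_smul_comm, smul_mul_smul_comm,
            one_mul, mul_one, smul_sub, smul_add]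
          rw [hww2]
          match_scalars <;> linarith [hs]
        rcases mul_eq_zero.mp hfac with h | h
        · exact hia (Real.sqrt a) (by linear_combination (norm := module) h)
        · exact hia (-Real.sqrt a) (by linear_combination (norm := module) h)
      obtain ⟨j, hj⟩ : ∃ j : E, j = (Real.sqrt (-a))⁻¹ • w := ⟨_, rfl⟩
      have hsa : Real.sqrt (-a) ^ 2 = -a := Real.sq_sqrt (by linarith)
      have hsane : Real.sqrt (-a) ≠ 0 := ne_of_gt (Real.sqrt_pos.mpr (by linarith))
      have hjj : j * j = -1 := by
        rw [hj, smul_mul_smul_comm, hww2, smul_smul, show (-1:E) = (-1:ℝ) • (1:E) by simp]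
        match_scalars
        field_simp
        linarith [hsa]
      have hij : i * j = -(j * i) := by
        rw [hj, mul_smul_comm, smul_mul_assoc, hwa, smul_neg]
      let Q : QuaternionAlgebra.Basis E (-1:ℝ) (0:ℝ) (-1:ℝ) :=
        { i := i, j := j, k := i * j
          i_mul_i := by rw [hi]; simp
          j_mul_j := by rw [hjj]; simp
          i_mul_j := rfl
          j_mul_i := by rw [hij]; simp }
      let f : Quaternion ℝ →ₐ[ℝ] E := Q.liftHom
      have hsurj : Function.Surjective f := by
        intro z
        obtain ⟨zp, hzp_def⟩ : ∃ t : E, t = (2:ℝ)⁻¹ • (z - i * z * i) := ⟨_, rfl⟩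
        obtain ⟨zm, hzm_def⟩ : ∃ t : E, t = (2:ℝ)⁻¹ • (z + i * z * i) := ⟨_, rfl⟩
        have hzp : i * zp = zp * i := by
          rw [hzp_def, mul_smul_comm, smul_mul_assoc]
          congr 1
          rw [mul_sub, sub_mul, key1, key2]
          abel
        have hzm : i * zm = -(zm * i) := by
          rw [hzm_def, mul_smul_comm, smul_mul_assoc, ← smul_neg]
          congr 1
          rw [mul_add, add_mul, key1, key2]
          abel
        have hzdecomp : z = zp + zm := by
          rw [hzp_def, hzm_def]
          match_scalars <;> ring
        have hmj : i * (zm * j) = (zm * j) * i := by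
          calc i * (zm * j) = (i * zm) * j := (mul_assoc i zm j).symm
          _ = -((zm * i) * j) := by rw [hzm, neg_mul]
          _ = -(zm * (i * j)) := by rw [mul_assoc]
          _ = zm * (j * i) := by rw [hij, mul_neg, neg_neg]
          _ = (zm * j) * i := (mul_assoc zm j i).symm
        obtain ⟨p, q, hpq⟩ := Submodule.mem_span_pair.mp (aux_centralizer hi hzp)
        obtain ⟨u, v, huv⟩ := Submodule.mem_span_pair.mp (aux_centralizer hi hmj)
        have hzm2 : zm = -(u • j) - v • (i * j) := by
          have h7 : (zm * j) * j = (u • (1:E) + v • i) * j := by rw [huv]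
          rw [mul_assoc, hjj, mul_neg_one] at h7
          have h8 : zm = -((u • (1:E) + v • i) * j) := by rw [← h7, neg_neg]
          rw [h8, add_mul, smul_mul_assoc, one_mul, smul_mul_assoc, neg_add]
          abel
        refine ⟨⟨p, q, -u, -v⟩, ?_⟩
        have happ : f ⟨p, q, -u, -v⟩ = p • (1:E) + q • i + (-u) • j + (-v) • (i * j) := by
          show Q.lift ⟨p, q, -u, -v⟩ = _
          unfold QuaternionAlgebra.Basis.lift
          rw [Algebra.algebraMap_eq_smul_one]
        rw [happ, hzdecomp, ← hpq, hzm2]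
        module
      exact ⟨(AlgEquiv.ofBijective f ⟨f.toRingHom.injective, hsurj⟩).symm⟩


section Wedderburn

variable {A : Type*} [Ring A] [Algebra ℝ A] [FiniteDimensional ℝ A] [IsSimpleRing A]
variable (L : Submodule A A) (hL : IsAtom L)

/-- Rieffel's homomorphism `A → End_D(L)` where `D = End_A(L)`. -/
noncomputable def rieffel : A →ₐ[ℝ] Module.End (Module.End A L) L where
  toFun a :=
    { toFun := fun z => a • z
      map_add' := fun z w => smul_add a z w
      map_smul' := fun f z => (f.map_smul a z).symm }
  map_one' := by ext z; simp
  map_mul' a b := by ext z; simp [mul_smul]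
  map_zero' := by ext z; simp
  map_add' a b := by ext z; simp [add_smul]
  commutes' r := by
    refine LinearMap.ext fun z => ?_
    show (algebraMap ℝ A r) • z = _
    rw [algebraMap_smul]
    simp [Module.algebraMap_end_apply]

set_option maxHeartbeats 1000000 in
set_option synthInstance.maxHeartbeats 400000 in
theorem rieffel_bijective (hL : IsAtom L) : Function.Bijective (rieffel L) := by
  haveI : IsSimpleModule A L := isSimpleModule_iff_isAtom.mpr hL
  haveI : Nontrivial L := Submodule.nontrivial_iff_ne_bot.mpr hL.1
  constructor
  · exact (rieffel L).toRingHom.injective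
  · -- Rieffel's argument
    set D := Module.End A L with hD
    set lam := rieffel L with hlam
    -- the left ideal L·A
    set J : Submodule A A := Submodule.span A {y | ∃ x ∈ L, ∃ r : A, y = x * r} with hJ
    have hone : (1 : A) ∈ J := by
      let I : TwoSidedIdeal A := TwoSidedIdeal.mk' J (zero_mem J)
        (fun ha hb => add_mem ha hb) (fun ha => neg_mem ha)
        (fun {u y} hy => by simpa using J.smul_mem u hy)
        (fun {u y} hy => by
          refine Submodule.span_induction ?_ ?_ ?_ ?_ hy
          · rintro w ⟨x, hx, r, rfl⟩
            exact Submodule.subset_span ⟨x, hx, r * y, by rw [mul_assoc]⟩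
          · simpa using zero_mem J
          · intro p q _ _ hp hq
            simpa [add_mul] using add_mem hp hq
          · intro c p _ hp
            have : (c • p) * y = c • (p * y) := by
              simp [smul_eq_mul, mul_assoc]
            rw [this]
            exact J.smul_mem c hp)
      have hIne : I ≠ ⊥ := by
        obtain ⟨x, hxL, hxne⟩ := Submodule.exists_mem_ne_zero_of_ne_bot hL.1
        intro hbot
        have hxI : x ∈ I := by
          rw [TwoSidedIdeal.mem_mk']
          exact Submodule.subset_span ⟨x, hxL, 1, (mul_one x).symm⟩
        rw [hbot] at hxI
        exact hxne (by simpa using hxI)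
      have : I = ⊤ := (IsSimpleRing.simple.eq_bot_or_eq_top I).resolve_left hIne
      have h1I : (1 : A) ∈ I := by rw [this]; trivial
      rwa [TwoSidedIdeal.mem_mk'] at h1I
    -- the key induction
    have key : ∀ y ∈ J, ∀ b : Module.End (Module.End A L) L, ∃ c : A, b ∘ₗ lam y = lam c := by
      intro y hy
      refine Submodule.span_induction ?_ ?_ ?_ ?_ hy
      · rintro w ⟨x, hx, r, rfl⟩ b
        refine ⟨((b ⟨x, hx⟩ : L) : A) * r, ?_⟩
        refine LinearMap.ext fun z => ?_
        show b ((x * r) • z) = (((b ⟨x, hx⟩ : L) : A) * r) • z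
        have h1 : (x * r) • z = (fun (w : L) => ((w : A) • (r • z) : L)) ⟨x, hx⟩ := by
          show (x * r) • z = (x • (r • z) : L)
          rw [mul_smul]
        -- ρ : right multiplication as an A-linear endomorphism of L
        let ρ : Module.End A L :=
          { toFun := fun w => ((w : A) • (r • z) : L)
            map_add' := fun w₁ w₂ => by
              simp only [Submodule.coe_add]
              rw [add_smul]
            map_smul' := fun a w => by
              simp only [Submodule.coe_smul, RingHom.id_apply, smul_eq_mul]
              rw [mul_smul] }
        have h2 : b ((x * r) • z) = b (ρ • (⟨x, hx⟩ : L)) := by rw [h1]; rfl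
        rw [h2, b.map_smul]
        show (ρ (b ⟨x, hx⟩) : L) = _
        simp only [ρ, LinearMap.coe_mk, AddHom.coe_mk]
        rw [smul_smul]
      · intro b
        exact ⟨0, by ext z; simp⟩
      · intro p q _ _ hp hq b
        obtain ⟨c₁, hc₁⟩ := hp b
        obtain ⟨c₂, hc₂⟩ := hq b
        refine ⟨c₁ + c₂, ?_⟩
        have hadd1 : lam (p + q) = lam p + lam q := lam.toLinearMap.map_add p q
        have hadd2 : lam (c₁ + c₂) = lam c₁ + lam c₂ := lam.toLinearMap.map_add c₁ c₂
        rw [hadd1, hadd2, LinearMap.comp_add, hc₁, hc₂]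
      · intro a p _ hp b
        obtain ⟨c, hc⟩ := hp (b ∘ₗ lam a)
        refine ⟨c, ?_⟩
        have : lam (a • p) = lam a ∘ₗ lam p := by
          rw [smul_eq_mul, map_mul]; rfl
        rw [this, ← LinearMap.comp_assoc, hc]
    intro b
    obtain ⟨c, hc⟩ := key 1 hone b
    refine ⟨c, ?_⟩
    rw [map_one] at hc
    have : b ∘ₗ (1 : Module.End (Module.End A L) L) = b := by ext z; rfl
    rw [this] at hc
    exact hc.symm

end Wedderburn

universe uu
set_option maxHeartbeats 1600000 in
set_option synthInstance.maxHeartbeats 1000000 in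
theorem wedderburn_exists (A : Type uu) [Ring A] [Algebra ℝ A] [FiniteDimensional ℝ A]
    [IsSimpleRing A] :
    ∃ (n : ℕ) (D : Type uu) (_ : DivisionRing D) (_ : Algebra ℝ D) (_ : FiniteDimensional ℝ D),
      1 ≤ n ∧ Nonempty (A ≃ₐ[ℝ] Matrix (Fin n) (Fin n) D) := by
  haveI : IsArtinian A A := isArtinian_of_tower ℝ inferInstance
  haveI : IsAtomic (Submodule A A) := isAtomic_of_orderBot_wellFounded_lt this.wf
  have htopbot : (⊤ : Submodule A A) ≠ ⊥ := by
    intro h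
    have : (1 : A) ∈ (⊥ : Submodule A A) := h ▸ Submodule.mem_top
    simpa using this
  obtain ⟨L, hL, -⟩ := (IsAtomic.eq_bot_or_exists_atom_le (⊤ : Submodule A A)).resolve_left htopbot
  haveI : IsSimpleModule A L := isSimpleModule_iff_isAtom.mpr hL
  haveI : Nontrivial L := Submodule.nontrivial_iff_ne_bot.mpr hL.1
  letI : DecidableEq (Module.End A L) := Classical.decEq _
  letI instD : DivisionRing (Module.End A L) := Module.End.instDivisionRing
  haveI hfdL : FiniteDimensional ℝ L :=
    FiniteDimensional.of_injective ((L.subtype).restrictScalars ℝ) Subtype.val_injective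
  haveI hfdD : FiniteDimensional ℝ (Module.End A L) :=
    FiniteDimensional.of_injective (LinearMap.restrictScalarsₗ ℝ A L L ℝ)
      (LinearMap.restrictScalars_injective ℝ)
  -- L is finite over D
  have hsc : ∀ (r : ℝ) (z : L), r • z = (r • (1 : Module.End A L)) • z := by
    intro r z
    show r • z = (r • (1 : Module.End A L)) z
    simp
  haveI hfinD : Module.Finite (Module.End A L) L := by
    obtain ⟨S, hS⟩ := Module.Finite.fg_top (R := ℝ) (M := L)
    refine ⟨⟨S, ?_⟩⟩
    rw [eq_top_iff]
    rintro z -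
    have hz : z ∈ Submodule.span ℝ (S : Set L) := hS ▸ Submodule.mem_top
    refine Submodule.span_induction ?_ ?_ ?_ ?_ hz
    · exact fun w hw => Submodule.subset_span hw
    · exact Submodule.zero_mem _
    · exact fun p q _ _ hp hq => Submodule.add_mem _ hp hq
    · intro r p _ hp
      rw [hsc r p]
      exact Submodule.smul_mem _ _ hp
  haveI : StrongRankCondition (Module.End A L) := inferInstance
  haveI : Module.Free (Module.End A L) L := Module.Free.of_divisionRing _ _
  set n := finrank (Module.End A L) L with hn
  have hnpos : 1 ≤ n := Module.finrank_pos
  -- basis of L over D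
  let b : Basis (Fin n) (Module.End A L) L := Module.finBasis (Module.End A L) L
  let e : L ≃ₗ[Module.End A L] (Fin n → Module.End A L) := b.equivFun
  -- conjugation ring equivalence
  let conj : Module.End (Module.End A L) L ≃+* Module.End (Module.End A L) (Fin n → Module.End A L) :=
    { toFun := fun f => (e.toLinearMap ∘ₗ f) ∘ₗ e.symm.toLinearMap
      invFun := fun g => (e.symm.toLinearMap ∘ₗ g) ∘ₗ e.toLinearMap
      left_inv := fun f => by ext z; simp
      right_inv := fun g => by ext z; simp
      map_mul' := fun f g => by ext z; simp
      map_add' := fun f g => by ext z; simp }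
  let e2 : Module.End (Module.End A L) L ≃ₐ[ℝ] Module.End (Module.End A L) (Fin n → Module.End A L) := AlgEquiv.ofRingEquiv (f := conj) (by
    intro r
    refine LinearMap.ext fun v => ?_
    show e ((algebraMap ℝ (Module.End (Module.End A L) L) r) (e.symm v)) = (algebraMap ℝ (Module.End (Module.End A L) (Fin n → Module.End A L)) r) v
    rw [Module.algebraMap_end_apply, Module.algebraMap_end_apply]
    rw [hsc r (e.symm v), show (r • (1 : Module.End A L)) = algebraMap ℝ (Module.End A L) r from
      (Algebra.algebraMap_eq_smul_one r).symm, e.map_smul, e.apply_symm_apply, algebraMap_smul])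
  let e3 : Module.End (Module.End A L) (Fin n → Module.End A L) ≃ₐ[ℝ] Matrix (Fin n) (Fin n) (Module.End (Module.End A L) (Module.End A L)) :=
    endVecAlgEquivMatrixEnd (Fin n) ℝ (Module.End A L) (Module.End A L)
  let e5 : Module.End (Module.End A L) (Module.End A L) ≃ₐ[ℝ] (Module.End A L)ᵐᵒᵖ := AlgEquiv.ofRingEquiv
    (f := (RingEquiv.moduleEndSelf (Module.End A L)).symm) (by
      intro r
      simp [Module.algebraMap_end_apply, MulOpposite.algebraMap_apply,
        Algebra.algebraMap_eq_smul_one])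
  let e1 : A ≃ₐ[ℝ] Module.End (Module.End A L) L := AlgEquiv.ofBijective (rieffel L) (rieffel_bijective L hL)
  haveI : FiniteDimensional ℝ (Module.End A L)ᵐᵒᵖ :=
    Module.Finite.equiv (MulOpposite.opLinearEquiv ℝ : Module.End A L ≃ₗ[ℝ] (Module.End A L)ᵐᵒᵖ)
  exact ⟨n, (Module.End A L)ᵐᵒᵖ, inferInstance, inferInstance, inferInstance, hnpos,
    ⟨((e1.trans e2).trans e3).trans (e5.mapMatrix : Matrix (Fin n) (Fin n) (Module.End (Module.End A L) (Module.End A L)) ≃ₐ[ℝ] Matrix (Fin n) (Fin n) (Module.End A L)ᵐᵒᵖ)⟩⟩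

/-- Every finite-dimensional simple `ℝ`-algebra is isomorphic to a matrix algebra
`Mₙ(ℝ)`, `Mₙ(ℂ)`, or `Mₙ(ℍ)` for some `n ≥ 1` (Wedderburn + Frobenius). -/
theorem simple_real_algebra_iso_matrix (A : Type) [Ring A] [Algebra ℝ A]
    [FiniteDimensional ℝ A] [IsSimpleRing A] :
    ∃ n : ℕ, 1 ≤ n ∧
      (Nonempty (A ≃ₐ[ℝ] Matrix (Fin n) (Fin n) ℝ) ∨
       Nonempty (A ≃ₐ[ℝ] Matrix (Fin n) (Fin n) ℂ) ∨
       Nonempty (A ≃ₐ[ℝ] Matrix (Fin n) (Fin n) (Quaternion ℝ))) := by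
  obtain ⟨n, D, _, _, _, hn, ⟨e⟩⟩ := wedderburn_exists A
  refine ⟨n, hn, ?_⟩
  rcases frobenius_division_algebra D with h | h | h
  · obtain ⟨φ⟩ := h
    exact Or.inl ⟨e.trans φ.mapMatrix⟩
  · obtain ⟨φ⟩ := h
    exact Or.inr (Or.inl ⟨e.trans φ.mapMatrix⟩)
  · obtain ⟨φ⟩ := h
    exact Or.inr (Or.inr ⟨e.trans φ.mapMatrix⟩)
end

section
/- Every automorphism of a central simple algebra A over a field k is inner, i.e., given by conjugation by a unit of A (Skolem–Noether). -/
set_option maxHeartbeats 1000000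
set_option linter.unnecessarySimpa false

open TensorProduct

section MopSimple
variable (A : Type*) [Ring A]

lemma SN.isSimpleRing_mop [IsSimpleRing A] : IsSimpleRing Aᵐᵒᵖ := by
  constructor
  constructor
  intro I
  let J : TwoSidedIdeal A := TwoSidedIdeal.mk' {a : A | MulOpposite.op a ∈ I}
    (by simpa using I.zero_mem)
    (fun hx hy => by simpa using I.add_mem hx hy)
    (fun hx => by simpa using I.neg_mem hx)
    (fun {x y} hy => by simpa [MulOpposite.op_mul] using I.mul_mem_right _ _ hy)
    (fun {x y} hx => by simpa [MulOpposite.op_mul] using I.mul_mem_left _ _ hx)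
  have hmem : ∀ a : A, a ∈ J ↔ MulOpposite.op a ∈ I := fun a => TwoSidedIdeal.mem_mk' _ _ _ _ _ _ a
  rcases IsSimpleRing.simple.eq_bot_or_eq_top J with h | h
  · left
    refine TwoSidedIdeal.ext fun x => ?_
    rw [TwoSidedIdeal.mem_bot]
    constructor
    · intro hx
      have : x.unop ∈ J := by rw [hmem]; simpa using hx
      rw [h, TwoSidedIdeal.mem_bot] at this
      simpa using congrArg MulOpposite.op this
    · rintro rfl; exact I.zero_mem
  · right
    refine TwoSidedIdeal.ext fun x => ?_
    simp only [TwoSidedIdeal.mem_top, iff_true]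
    have : x.unop ∈ J := by rw [h]; exact TwoSidedIdeal.mem_top A
    rw [hmem] at this; simpa using this

end MopSimple

open TensorProduct

section TensorSimple

variable (k : Type) [Field k] (A : Type) [Ring A] [Algebra k A]
  [Algebra.IsCentral k A] [IsSimpleRing A]
  (C : Type) [Ring C] [Algebra k C] [IsSimpleRing C]

lemma SN.tensor_simple : IsSimpleRing (A ⊗[k] C) := by
  classical
  have : Nontrivial A := inferInstance
  set ι := Module.Basis.ofVectorSpaceIndex k C with hι
  let e : Module.Basis ι k C := Module.Basis.ofVectorSpace k C
  let Φ : A ⊗[k] C ≃ₗ[k] (ι →₀ A) :=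
    (TensorProduct.congr (LinearEquiv.refl k A) e.repr).trans
      (TensorProduct.finsuppScalarRight k k A ι)
  have hΦ1 : ∀ (a : A) (c : C) (j : ι), Φ (a ⊗ₜ c) j = e.repr c j • a := by
    intro a c j
    simp [Φ]
  have hΦ2 : ∀ (a : A) (j : ι), Φ (a ⊗ₜ e j) = Finsupp.single j a := by
    intro a j
    ext i
    rw [hΦ1, Module.Basis.repr_self]
    rw [Finsupp.single_apply, Finsupp.single_apply]
    split <;> simp
  have K1L : ∀ (x : A) (z : A ⊗[k] C) (j : ι), Φ ((x ⊗ₜ (1:C)) * z) j = x * Φ z j := by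
    intro x z j
    induction z using TensorProduct.induction_on with
    | zero => simp
    | tmul a c => rw [Algebra.TensorProduct.tmul_mul_tmul, one_mul, hΦ1, hΦ1, mul_smul_comm]
    | add z w hz hw => rw [mul_add, map_add, Finsupp.add_apply, hz, hw, map_add,
        Finsupp.add_apply, mul_add]
  have K1R : ∀ (y : A) (z : A ⊗[k] C) (j : ι), Φ (z * (y ⊗ₜ (1:C))) j = Φ z j * y := by
    intro y z j
    induction z using TensorProduct.induction_on with
    | zero => simp
    | tmul a c => rw [Algebra.TensorProduct.tmul_mul_tmul, mul_one, hΦ1, hΦ1, smul_mul_assoc]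
    | add z w hz hw => rw [add_mul, map_add, Finsupp.add_apply, hz, hw, map_add,
        Finsupp.add_apply, add_mul]
  constructor; constructor
  intro I
  rcases eq_or_ne I ⊥ with hbot | hbot
  · left; exact hbot
  right
  have hex : ∃ z, z ∈ I ∧ z ≠ 0 := by
    by_contra h
    push_neg at h
    refine hbot (TwoSidedIdeal.ext fun x => ?_)
    rw [TwoSidedIdeal.mem_bot]
    exact ⟨fun hx => h x hx, by rintro rfl; exact I.zero_mem⟩
  let S : Set ℕ := {m | ∃ z, z ∈ I ∧ z ≠ 0 ∧ (Φ z).support.card = m}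
  have hS : S.Nonempty := by
    obtain ⟨z, hzI, hz0⟩ := hex
    exact ⟨_, z, hzI, hz0, rfl⟩
  obtain ⟨z, hzI, hz0, hzcard⟩ := Nat.sInf_mem hS
  have hmin : ∀ w, w ∈ I → w ≠ 0 → sInf S ≤ (Φ w).support.card := fun w hwI hw0 =>
    Nat.sInf_le ⟨w, hwI, hw0, rfl⟩
  have hΦz : Φ z ≠ 0 := fun h => hz0 (by
    have := congrArg Φ.symm h
    simpa using this)
  obtain ⟨j₀, hj₀⟩ := Finsupp.support_nonempty_iff.mpr hΦz
  -- the two-sided ideal of A of coefficients at j₀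
  let K : TwoSidedIdeal A := TwoSidedIdeal.mk'
    {a : A | ∃ w, w ∈ I ∧ (Φ w).support ⊆ (Φ z).support ∧ Φ w j₀ = a}
    ⟨0, I.zero_mem, by simp⟩
    (by
      rintro x y ⟨w, hwI, hws, rfl⟩ ⟨w', hwI', hws', rfl⟩
      refine ⟨w + w', I.add_mem hwI hwI', ?_, by rw [map_add, Finsupp.add_apply]⟩
      rw [map_add]
      exact Finsupp.support_add.trans (Finset.union_subset hws hws'))
    (by
      rintro x ⟨w, hwI, hws, rfl⟩
      refine ⟨-w, I.neg_mem hwI, ?_, by rw [map_neg, Finsupp.neg_apply]⟩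
      rw [map_neg]
      simpa using hws)
    (by
      rintro x y ⟨w, hwI, hws, rfl⟩
      refine ⟨(x ⊗ₜ (1:C)) * w, I.mul_mem_left _ _ hwI, ?_, K1L x w j₀⟩
      intro j hj
      refine hws (Finsupp.mem_support_iff.mpr fun h0 => Finsupp.mem_support_iff.mp hj ?_)
      rw [K1L, h0, mul_zero])
    (by
      rintro x y ⟨w, hwI, hws, rfl⟩
      refine ⟨w * (y ⊗ₜ (1:C)), I.mul_mem_right _ _ hwI, ?_, K1R y w j₀⟩
      intro j hj
      refine hws (Finsupp.mem_support_iff.mpr fun h0 => Finsupp.mem_support_iff.mp hj ?_)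
      rw [K1R, h0, zero_mul])
  have hKa : Φ z j₀ ∈ K := (TwoSidedIdeal.mem_mk' _ _ _ _ _ _ _).mpr
    ⟨z, hzI, subset_rfl, rfl⟩
  have hK1 : (1:A) ∈ K :=
    IsSimpleRing.one_mem_of_ne_zero_mem K (Finsupp.mem_support_iff.mp hj₀) hKa
  rw [TwoSidedIdeal.mem_mk'] at hK1
  obtain ⟨w, hwI, hws, hwj₀⟩ := hK1
  have hw0 : w ≠ 0 := fun h => one_ne_zero (α := A) (by rw [← hwj₀, h, map_zero]; rfl)
  -- commutators vanish by minimality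
  have hcomm : ∀ x : A, (x ⊗ₜ (1:C)) * w = w * (x ⊗ₜ (1:C)) := by
    intro x
    by_contra hv
    have hv2 : (x ⊗ₜ (1:C)) * w - w * (x ⊗ₜ (1:C)) ≠ 0 := sub_ne_zero.mpr hv
    set v := (x ⊗ₜ (1:C)) * w - w * (x ⊗ₜ (1:C)) with hvdef
    have hvI : v ∈ I := I.sub_mem (I.mul_mem_left _ _ hwI) (I.mul_mem_right _ _ hwI)
    have hsub : (Φ v).support ⊆ (Φ z).support.erase j₀ := by
      intro j hj
      rw [Finsupp.mem_support_iff, hvdef, map_sub, Finsupp.sub_apply, K1L, K1R] at hj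
      rw [Finset.mem_erase]
      constructor
      · rintro rfl
        exact hj (by rw [hwj₀, mul_one, one_mul, sub_self])
      · refine hws (Finsupp.mem_support_iff.mpr fun h0 => hj ?_)
        rw [h0, mul_zero, zero_mul, sub_zero]
    have h1 := hmin v hvI hv2
    have h2 : (Φ v).support.card < sInf S := by
      calc (Φ v).support.card ≤ ((Φ z).support.erase j₀).card := Finset.card_le_card hsub
        _ < (Φ z).support.card := Finset.card_erase_lt_of_mem hj₀
        _ = sInf S := hzcard
    omega
  -- coefficients are central
  have hcen : ∀ j, ∃ lam : k, Φ w j = algebraMap k A lam := by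
    intro j
    have h1 : ∀ x : A, x * Φ w j = Φ w j * x := by
      intro x
      have h2 := congrArg (fun t => Φ t j) (hcomm x)
      simpa only [K1L, K1R] using h2
    have h3 : Φ w j ∈ Subalgebra.center k A := Subalgebra.mem_center_iff.mpr h1
    rw [Algebra.IsCentral.center_eq_bot, Algebra.mem_bot] at h3
    obtain ⟨lam, h⟩ := h3
    exact ⟨lam, h.symm⟩
  choose lam hlam using hcen
  set b : C := ∑ j ∈ (Φ w).support, lam j • e j with hbdef
  have hwb : w = (1:A) ⊗ₜ b := by
    apply Φ.injective
    have h4 : (1:A) ⊗ₜ[k] b = ∑ j ∈ (Φ w).support, lam j • ((1:A) ⊗ₜ[k] e j) := by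
      rw [hbdef, tmul_sum]
      exact Finset.sum_congr rfl fun j _ => tmul_smul (lam j) 1 (e j)
    rw [h4, map_sum]
    have h5 : ∀ j, lam j • Φ ((1:A) ⊗ₜ[k] e j) = Finsupp.single j (Φ w j) := by
      intro j
      rw [hΦ2, Finsupp.smul_single, hlam, Algebra.algebraMap_eq_smul_one]
    simp only [map_smul, h5]
    exact (Finsupp.sum_single (Φ w)).symm
  have hb0 : b ≠ 0 := by
    intro h
    rw [h, tmul_zero] at hwb
    exact hw0 hwb
  -- the two-sided ideal of C of elements c with 1 ⊗ c ∈ I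
  let L : TwoSidedIdeal C := TwoSidedIdeal.mk' {c : C | (1:A) ⊗ₜ[k] c ∈ I}
    (by simpa [tmul_zero] using I.zero_mem)
    (by
      intro x y hx hy
      simpa [tmul_add] using I.add_mem hx hy)
    (by
      intro x hx
      have : (1:A) ⊗ₜ[k] (-x) = -((1:A) ⊗ₜ[k] x) := by rw [tmul_neg]
      rw [Set.mem_setOf_eq, this]
      exact I.neg_mem hx)
    (by
      intro x y hy
      have hmul : (1:A) ⊗ₜ[k] (x*y) = ((1:A) ⊗ₜ[k] x) * ((1:A) ⊗ₜ[k] y) := by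
        rw [Algebra.TensorProduct.tmul_mul_tmul, one_mul]
      rw [Set.mem_setOf_eq, hmul]
      exact I.mul_mem_left _ _ hy)
    (by
      intro x y hx
      have hmul : (1:A) ⊗ₜ[k] (x*y) = ((1:A) ⊗ₜ[k] x) * ((1:A) ⊗ₜ[k] y) := by
        rw [Algebra.TensorProduct.tmul_mul_tmul, one_mul]
      rw [Set.mem_setOf_eq, hmul]
      exact I.mul_mem_right _ _ hx)
  have hbL : b ∈ L := (TwoSidedIdeal.mem_mk' _ _ _ _ _ _ _).mpr (by
    rw [Set.mem_setOf_eq, ← hwb]; exact hwI)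
  have h1L : (1:C) ∈ L := IsSimpleRing.one_mem_of_ne_zero_mem L hb0 hbL
  have h1I : (1 : A ⊗[k] C) ∈ I := by
    have h6 : (1:C) ∈ {c : C | (1:A) ⊗ₜ[k] c ∈ I} := (TwoSidedIdeal.mem_mk' _ _ _ _ _ _ _).mp h1L
    rw [Set.mem_setOf_eq] at h6
    rwa [Algebra.TensorProduct.one_def]
  refine TwoSidedIdeal.ext fun x => ?_
  simp only [TwoSidedIdeal.mem_top, iff_true]
  simpa using I.mul_mem_left x 1 h1I

end TensorSimple

section UniqueSimple

variable (B : Type*) [Ring B] [IsSimpleRing B] [IsArtinian B B]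
universe v
variable (M N : Type v) [AddCommGroup M] [Module B M] [AddCommGroup N] [Module B N]

lemma SN.simple_module_unique [IsSimpleModule B M] [IsSimpleModule B N] :
    Nonempty (M ≃ₗ[B] N) := by
  classical
  -- find an atom (minimal nonzero left ideal)
  have hatomic : IsAtomic (Submodule B B) :=
    isAtomic_of_orderBot_wellFounded_lt (IsWellFounded.wf)
  have hnt : (⊤ : Submodule B B) ≠ ⊥ := by
    intro h
    have : (1 : B) ∈ (⊥ : Submodule B B) := h ▸ Submodule.mem_top
    simp only [Submodule.mem_bot] at this
    exact one_ne_zero this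
  obtain ⟨S, hS, -⟩ := (hatomic.eq_bot_or_exists_atom_le (⊤ : Submodule B B)).resolve_left hnt
  have hSsimple : IsSimpleModule B S := isSimpleModule_iff_isAtom.mpr hS
  set 𝒮 : Set (Submodule B B) := {T | Nonempty (T ≃ₗ[B] S)} with h𝒮
  have hS𝒮 : S ∈ 𝒮 := ⟨LinearEquiv.refl B S⟩
  set p : Submodule B B := sSup 𝒮 with hp
  have hsimple𝒮 : ∀ T ∈ 𝒮, IsSimpleModule B T := by
    rintro T ⟨iso⟩
    exact IsSimpleModule.congr iso
  -- p is closed under right multiplication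
  have hright : ∀ (r : B) (x : B), x ∈ p → x * r ∈ p := by
    intro r x hx
    set f : B →ₗ[B] B := LinearMap.toSpanSingleton B B r with hf
    have hmap : Submodule.map f p ≤ p := by
      rw [hp, (Submodule.gc_map_comap f).l_sSup]
      refine iSup₂_le fun T hT => ?_
      have hTsimple : IsSimpleModule B T := hsimple𝒮 T hT
      set g : T →ₗ[B] B := f ∘ₗ T.subtype with hg
      have hrange : LinearMap.range g = Submodule.map f T := by
        rw [hg, LinearMap.range_comp, Submodule.range_subtype]
      rcases eq_or_ne g 0 with h0 | h0
      · rw [← hrange, h0, LinearMap.range_zero]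
        exact bot_le
      · have hinj : Function.Injective g := LinearMap.injective_of_ne_zero h0
        have : LinearMap.range g ∈ 𝒮 := by
          obtain ⟨iso⟩ := hT
          exact ⟨((LinearEquiv.ofInjective g hinj).symm).trans iso⟩
        rw [← hrange]
        exact le_sSup this
    have : f x ∈ Submodule.map f p := Submodule.mem_map_of_mem hx
    have hfx : f x = x * r := by
      rw [hf, LinearMap.toSpanSingleton_apply, smul_eq_mul]
    exact hmap (hfx ▸ this)
  -- hence p is a two-sided ideal, so p = ⊤
  have hptop : p = ⊤ := by
    let J : TwoSidedIdeal B := TwoSidedIdeal.mk' (p : Set B)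
      p.zero_mem (fun ha hb => p.add_mem ha hb) (fun ha => p.neg_mem ha)
      (fun {x y} hy => by simpa [smul_eq_mul] using p.smul_mem x hy)
      (fun {x y} hx => hright y x hx)
    have hJmem : ∀ x : B, x ∈ J ↔ x ∈ p := fun x => TwoSidedIdeal.mem_mk' _ _ _ _ _ _ x
    have hJ1 : (1 : B) ∈ J := by
      refine IsSimpleRing.one_mem_of_ne_bot J fun hJbot => ?_
      have hSbot : S ≠ ⊥ := hS.1
      obtain ⟨s, hsS, hs0⟩ := Submodule.exists_mem_ne_zero_of_ne_bot hSbot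
      have : s ∈ J := (hJmem s).mpr (le_sSup hS𝒮 hsS)
      rw [hJbot, TwoSidedIdeal.mem_bot] at this
      exact hs0 this
    rw [hJmem] at hJ1
    rw [Submodule.eq_top_iff']
    intro x
    simpa [smul_eq_mul] using p.smul_mem x hJ1
  -- every simple module is isomorphic to S
  have hiso : ∀ (N' : Type v) [AddCommGroup N'] [Module B N'] [IsSimpleModule B N'],
      Nonempty (S ≃ₗ[B] N') := by
    intro N' _ _ _
    have : Nontrivial N' := IsSimpleModule.nontrivial B N'
    obtain ⟨n, hn⟩ := exists_ne (0 : N')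
    set q : B →ₗ[B] N' := LinearMap.toSpanSingleton B N' n with hq
    have hq1 : q 1 = n := by rw [hq, LinearMap.toSpanSingleton_apply, one_smul]
    have hex : ∃ T ∈ 𝒮, ¬ T ≤ LinearMap.ker q := by
      by_contra h
      push_neg at h
      have : p ≤ LinearMap.ker q := sSup_le h
      rw [hptop, top_le_iff] at this
      have : q 1 = 0 := by
        have h1 : (1:B) ∈ LinearMap.ker q := this ▸ Submodule.mem_top
        simpa using h1
      exact hn (by rw [← hq1, this])
    obtain ⟨T, hT𝒮, hTker⟩ := hex
    have hTsimple : IsSimpleModule B T := hsimple𝒮 T hT𝒮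
    set g : T →ₗ[B] N' := q ∘ₗ T.subtype with hg
    have hg0 : g ≠ 0 := by
      obtain ⟨t, htT, htk⟩ := SetLike.not_le_iff_exists.mp hTker
      intro h0
      apply htk
      have : g ⟨t, htT⟩ = 0 := by rw [h0]; rfl
      simpa [hg, LinearMap.mem_ker] using this
    have hbij : Function.Bijective g := LinearMap.bijective_of_ne_zero hg0
    obtain ⟨isoT⟩ := hT𝒮
    exact ⟨isoT.symm.trans (LinearEquiv.ofBijective g hbij)⟩
  obtain ⟨eM⟩ := hiso M
  obtain ⟨eN⟩ := hiso N
  exact ⟨eM.symm.trans eN⟩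

end UniqueSimple

open TensorProduct

section ModStruct

variable (k : Type) [Field k] (A : Type) [Ring A] [Algebra k A]

/-- Right multiplication as an algebra hom from the opposite algebra to endomorphisms. -/
noncomputable def SN.rmulAlg : Aᵐᵒᵖ →ₐ[k] Module.End k A where
  toFun b := LinearMap.mulRight k b.unop
  map_one' := by ext x; simp
  map_mul' b c := by ext x; simp [mul_assoc]
  map_zero' := by ext x; simp
  map_add' b c := by ext x; simp [mul_add]
  commutes' r := by
    ext x
    simp [Algebra.algebraMap_eq_smul_one, Module.algebraMap_end_apply, mul_smul_comm]

/-- The `k`-algebra map `A ⊗ Aᵐᵒᵖ → End k A`, `a ⊗ bᵒᵖ ↦ (x ↦ φ a * x * b)`. -/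
noncomputable def SN.rho (φ : A ≃ₐ[k] A) : (A ⊗[k] Aᵐᵒᵖ) →ₐ[k] Module.End k A :=
  Algebra.TensorProduct.lift
    ((Algebra.lmul k A).comp φ.toAlgHom)
    (SN.rmulAlg k A)
    (by
      intro a b
      refine LinearMap.ext fun x => ?_
      show φ a * (x * b.unop) = (φ a * x) * b.unop
      rw [mul_assoc])

lemma SN.rho_tmul (φ : A ≃ₐ[k] A) (a b x : A) :
    SN.rho k A φ (a ⊗ₜ[k] MulOpposite.op b) x = φ a * x * b := by
  unfold SN.rho
  erw [Algebra.TensorProduct.lift_tmul]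
  show φ a * (x * b) = φ a * x * b
  rw [mul_assoc]

/-- Type synonym: `A` as a module over `A ⊗ Aᵐᵒᵖ` with action twisted by `φ`. -/
@[nolint unusedArguments]
def SN.Mod (k A : Type) [Field k] [Ring A] [Algebra k A] (φ : A ≃ₐ[k] A) : Type := A

noncomputable instance (φ : A ≃ₐ[k] A) : AddCommGroup (SN.Mod k A φ) :=
  inferInstanceAs (AddCommGroup A)

noncomputable instance (φ : A ≃ₐ[k] A) : Module (A ⊗[k] Aᵐᵒᵖ) (SN.Mod k A φ) :=
  Module.compHom A (SN.rho k A φ).toRingHom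

/-- The identity map `A → SN.Mod k A φ`. -/
def SN.Mod.of (φ : A ≃ₐ[k] A) : A → SN.Mod k A φ := id

lemma SN.Mod.of_bijective (φ : A ≃ₐ[k] A) : Function.Bijective (SN.Mod.of k A φ) :=
  Function.bijective_id

lemma SN.Mod.smul_def (φ : A ≃ₐ[k] A) (z : A ⊗[k] Aᵐᵒᵖ) (x : A) :
    z • (SN.Mod.of k A φ x) = SN.Mod.of k A φ (SN.rho k A φ z x) := rfl

lemma SN.Mod.smul_tmul (φ : A ≃ₐ[k] A) (a b x : A) :
    (a ⊗ₜ[k] MulOpposite.op b) • (SN.Mod.of k A φ x) = SN.Mod.of k A φ (φ a * x * b) := by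
  rw [SN.Mod.smul_def, SN.rho_tmul]

lemma SN.Mod.isSimple [IsSimpleRing A] (φ : A ≃ₐ[k] A) :
    IsSimpleModule (A ⊗[k] Aᵐᵒᵖ) (SN.Mod k A φ) := by
  have : Nontrivial A := inferInstance
  have hnt : Nontrivial (SN.Mod k A φ) := ‹Nontrivial A›
  rw [isSimpleModule_iff]
  constructor
  intro p
  let J : TwoSidedIdeal A := TwoSidedIdeal.mk' {a : A | SN.Mod.of k A φ a ∈ p}
    p.zero_mem (fun ha hb => p.add_mem ha hb) (fun ha => p.neg_mem ha)
    (by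
      intro x y hy
      have h1 : (φ.symm x ⊗ₜ[k] MulOpposite.op (1:A)) • (SN.Mod.of k A φ y) ∈ p :=
        p.smul_mem _ hy
      rwa [SN.Mod.smul_tmul, AlgEquiv.apply_symm_apply, mul_one] at h1)
    (by
      intro x y hx
      have h1 : ((1:A) ⊗ₜ[k] MulOpposite.op y) • (SN.Mod.of k A φ x) ∈ p :=
        p.smul_mem _ hx
      rwa [SN.Mod.smul_tmul, map_one, one_mul] at h1)
  have hJmem : ∀ a : A, a ∈ J ↔ SN.Mod.of k A φ a ∈ p :=
    fun a => TwoSidedIdeal.mem_mk' _ _ _ _ _ _ a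
  rcases IsSimpleRing.simple.eq_bot_or_eq_top J with h | h
  · left
    refine (Submodule.eq_bot_iff p).mpr fun x hx => ?_
    have hxJ : (x : A) ∈ J := (hJmem x).mpr hx
    rw [h] at hxJ
    exact (TwoSidedIdeal.mem_bot (R := A)).mp hxJ
  · right
    rw [Submodule.eq_top_iff']
    intro x
    have hxJ : (x : A) ∈ J := h ▸ TwoSidedIdeal.mem_top A
    exact (hJmem x).mp hxJ

end ModStruct

/-- **Skolem–Noether**: every automorphism of a (finite-dimensional) central simple algebra
`A` over a field `k` is inner, i.e. given by conjugation by a unit of `A`. -/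
theorem skolem_noether_inner_automorphism
    (k : Type) [Field k] (A : Type) [Ring A] [Algebra k A] [FiniteDimensional k A]
    [Algebra.IsCentral k A] [IsSimpleRing A] (φ : A ≃ₐ[k] A) :
    ∃ u : Aˣ, ∀ x : A, φ x = ↑u * x * ↑u⁻¹ := by
  classical
  haveI : IsSimpleRing Aᵐᵒᵖ := SN.isSimpleRing_mop A
  haveI hBs : IsSimpleRing (A ⊗[k] Aᵐᵒᵖ) := SN.tensor_simple k A Aᵐᵒᵖ
  haveI : FiniteDimensional k Aᵐᵒᵖ := inferInstance
  haveI : FiniteDimensional k (A ⊗[k] Aᵐᵒᵖ) := inferInstance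
  haveI hart : IsArtinian (A ⊗[k] Aᵐᵒᵖ) (A ⊗[k] Aᵐᵒᵖ) :=
    isArtinian_of_tower k isArtinian_of_fg_of_artinian'
  haveI hs1 := SN.Mod.isSimple k A (AlgEquiv.refl (R := k) (A₁ := A))
  haveI hs2 := SN.Mod.isSimple k A φ
  obtain ⟨e⟩ := SN.simple_module_unique (A ⊗[k] Aᵐᵒᵖ)
    (SN.Mod k A (AlgEquiv.refl (R := k) (A₁ := A))) (SN.Mod k A φ)
  let f : A → A := fun x => e (SN.Mod.of k A _ x)
  have hf : ∀ a x b : A, f (a * x * b) = φ a * f x * b := by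
    intro a x b
    have h1 := e.map_smul (a ⊗ₜ[k] MulOpposite.op b) (SN.Mod.of k A _ x)
    rw [SN.Mod.smul_tmul] at h1
    rw [show e (SN.Mod.of k A (AlgEquiv.refl (R := k) (A₁ := A)) x)
        = SN.Mod.of k A φ (f x) from rfl] at h1
    rw [SN.Mod.smul_tmul] at h1
    exact h1
  have hbij : Function.Bijective f := e.bijective
  set u : A := f 1 with hu
  have h3 : ∀ x, f x = u * x := by
    intro x
    have h := hf 1 1 x
    rw [one_mul, one_mul, map_one, one_mul] at h
    exact h
  have h4 : ∀ x, φ x * u = f x := by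
    intro x
    have h := hf x 1 1
    rw [mul_one, mul_one, mul_one, ← hu] at h
    exact h.symm
  obtain ⟨v, hv⟩ := hbij.2 1
  have huv : u * v = 1 := by rw [← h3 v, hv]
  have hvu : v * u = 1 := by
    have h5 : f (v * u) = f 1 := by
      rw [h3 (v * u), ← mul_assoc, huv, one_mul, h3 1, mul_one]
    have := hbij.1 h5
    exact this
  refine ⟨⟨u, v, huv, hvu⟩, fun x => ?_⟩
  have h5 : φ x * u = u * x := by rw [h4, h3]
  show φ x = u * x * v
  calc φ x = φ x * (u * v) := by rw [huv, mul_one]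
    _ = (φ x * u) * v := by rw [mul_assoc]
    _ = u * x * v := by rw [h5]
end

section
/- If A and B are central simple algebras over ℝ, each isomorphic to a matrix algebra over ℝ or over ℍ, then A ⊗_ℝ B is isomorphic to a matrix algebra Mₛ(ℝ) or Mₜ(ℍ) for suitable s or t. -/
open scoped TensorProduct

set_option maxRecDepth 8000
noncomputable section QuatAux

local notation "ℍ" => Quaternion ℝ

/-- Basis 1, i, j, k of the quaternions. -/
def quatBasis : Module.Basis (Fin 4) ℝ ℍ := QuaternionAlgebra.basisOneIJK (-1) 0 (-1)

def quatE : Fin 4 → ℍ := ![1, ⟨0,1,0,0⟩, ⟨0,0,1,0⟩, ⟨0,0,0,1⟩]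

lemma quatE_re (i : Fin 4) : (quatE i).re = ![1, 0, 0, 0] i := by fin_cases i <;> rfl
lemma quatE_imI (i : Fin 4) : (quatE i).imI = ![0, 1, 0, 0] i := by fin_cases i <;> rfl
lemma quatE_imJ (i : Fin 4) : (quatE i).imJ = ![0, 0, 1, 0] i := by fin_cases i <;> rfl
lemma quatE_imK (i : Fin 4) : (quatE i).imK = ![0, 0, 0, 1] i := by fin_cases i <;> rfl

lemma quatBasis_apply (p : Fin 4) : quatBasis p = quatE p := by
  apply quatBasis.repr.injective
  apply DFunLike.coe_injective
  rw [Module.Basis.repr_self]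
  show _ = ⇑((QuaternionAlgebra.basisOneIJK (-1) 0 (-1)).repr (quatE p))
  erw [QuaternionAlgebra.coe_basisOneIJK_repr]
  funext r
  fin_cases p <;> fin_cases r <;>
    simp [Finsupp.single_apply, quatE_re, quatE_imI, quatE_imJ, quatE_imK]

/-- Left multiplication. -/
def quatL : ℍ →ₐ[ℝ] Module.End ℝ ℍ := Algebra.lmul ℝ ℍ

/-- Right multiplication by the conjugate. -/
def quatR : ℍ →ₐ[ℝ] Module.End ℝ ℍ where
  toFun b := LinearMap.mulRight ℝ (star b)
  map_one' := by refine LinearMap.ext fun x => ?_; simp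
  map_mul' b c := by
    refine LinearMap.ext fun x => ?_
    simp [Module.End.mul_apply, mul_assoc]
  map_zero' := by refine LinearMap.ext fun x => ?_; simp
  map_add' b c := by refine LinearMap.ext fun x => ?_; simp [mul_add]
  commutes' r := by
    refine LinearMap.ext fun x => ?_
    simp only [LinearMap.mulRight_apply, Module.algebraMap_end_apply]
    have h1 : star ((algebraMap ℝ ℍ) r) = algebraMap ℝ ℍ r := by
      ext <;> simp
    rw [h1, ← Algebra.commutes r x, ← Algebra.smul_def]

def quatPhi : (ℍ ⊗[ℝ] ℍ) →ₐ[ℝ] Module.End ℝ ℍ :=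
  Algebra.TensorProduct.lift quatL quatR fun a b => by
    refine LinearMap.ext fun x => ?_
    simp [quatL, quatR, Module.End.mul_apply, mul_assoc]

lemma quatPhi_tmul (a b x : ℍ) : quatPhi (a ⊗ₜ b) x = a * x * star b := by
  simp [quatPhi, quatL, quatR, mul_assoc]

lemma quat_sum_conj (y : ℍ) :
    ∑ r : Fin 4, quatE r * y * star (quatE r) = ((4 : ℝ) * y.re) • 1 := by
  ext <;>
    simp [Fin.sum_univ_four, quatE_re, quatE_imI, quatE_imJ, quatE_imK, Quaternion.re_one,
      Quaternion.imI_one, Quaternion.imJ_one, Quaternion.imK_one] <;> ring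

section More

lemma quat_coord (q : Fin 4) (x : ℍ) :
    (star (quatE q) * x).re = quatBasis.repr x q := by
  have h : (quatBasis.repr x) q = ![x.re, x.imI, x.imJ, x.imK] q := by
    rw [show ⇑(quatBasis.repr x) = ![x.re, x.imI, x.imJ, x.imK] from
      QuaternionAlgebra.coe_basisOneIJK_repr (R := ℝ) (c₁ := -1) (c₂ := 0) (c₃ := -1) x]
  rw [h]
  fin_cases q <;> simp [quatE_re, quatE_imI, quatE_imJ, quatE_imK] <;> ring

noncomputable def quatT : ℍ ⊗[ℝ] ℍ := ∑ r : Fin 4, quatE r ⊗ₜ quatE r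

noncomputable def quatU (p q : Fin 4) : ℍ ⊗[ℝ] ℍ :=
  (4⁻¹ : ℝ) • ((quatE p ⊗ₜ (1:ℍ)) * quatT * (star (quatE q) ⊗ₜ (1:ℍ)))

lemma quatPhi_quatU (p q : Fin 4) (x : ℍ) :
    quatPhi (quatU p q) x = (quatBasis.repr x q) • quatE p := by
  have expand : ((quatE p ⊗ₜ[ℝ] (1:ℍ)) * quatT * (star (quatE q) ⊗ₜ[ℝ] (1:ℍ)))
      = ∑ r : Fin 4, (quatE p * quatE r * star (quatE q)) ⊗ₜ[ℝ] quatE r := by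
    rw [quatT]
    refine ((congrArg (· * (star (quatE q) ⊗ₜ[ℝ] (1:ℍ))) (Finset.mul_sum _ _ _)).trans
      (Finset.sum_mul _ _ _)).trans ?_
    refine Finset.sum_congr rfl fun r _ => ?_
    rw [Algebra.TensorProduct.tmul_mul_tmul, Algebra.TensorProduct.tmul_mul_tmul, one_mul, mul_one]
  rw [quatU, map_smul, expand, map_sum]
  simp only [LinearMap.smul_apply, LinearMap.sum_apply, quatPhi_tmul]
  have h2 : ∑ r : Fin 4, quatE p * quatE r * star (quatE q) * x * star (quatE r)
      = quatE p * ∑ r : Fin 4, quatE r * (star (quatE q) * x) * star (quatE r) := by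
    rw [Finset.mul_sum]
    exact Finset.sum_congr rfl fun r _ => by simp only [mul_assoc]
  rw [h2, quat_sum_conj, quat_coord]
  rw [mul_smul_comm, mul_one, smul_smul]
  congr 1
  ring

lemma quatPhi_surjective : Function.Surjective quatPhi := by
  intro T
  refine ⟨∑ p : Fin 4, ∑ q : Fin 4,
    (LinearMap.toMatrix quatBasis quatBasis T p q) • quatU p q, ?_⟩
  rw [map_sum]
  refine LinearMap.ext fun x => ?_
  simp only [LinearMap.sum_apply, map_sum, map_smul, LinearMap.smul_apply, quatPhi_quatU]
  have hx : T x = ∑ q : Fin 4, quatBasis.repr x q • T (quatBasis q) := by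
    conv_lhs => rw [← quatBasis.sum_repr x]
    rw [map_sum]
    exact Finset.sum_congr rfl fun q _ => by rw [map_smul]
  have hT : ∀ q : Fin 4, T (quatBasis q)
      = ∑ p : Fin 4, (LinearMap.toMatrix quatBasis quatBasis T p q) • quatE p := by
    intro q
    conv_lhs => rw [← quatBasis.sum_repr (T (quatBasis q))]
    exact Finset.sum_congr rfl fun p _ => by
      rw [LinearMap.toMatrix_apply, quatBasis_apply p]
  rw [hx]
  rw [Finset.sum_comm]
  refine Finset.sum_congr rfl fun q _ => ?_
  rw [hT q, Finset.smul_sum]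
  exact Finset.sum_congr rfl fun p _ => by rw [smul_comm]

lemma quatPhi_bijective : Function.Bijective quatPhi := by
  have hrank : Module.finrank ℝ (ℍ ⊗[ℝ] ℍ) = Module.finrank ℝ (Module.End ℝ ℍ) := by
    rw [Module.finrank_tensorProduct, Module.finrank_linearMap, Quaternion.finrank_eq_four]
  exact ⟨(LinearMap.injective_iff_surjective_of_finrank_eq_finrank hrank).2
      quatPhi_surjective, quatPhi_surjective⟩

noncomputable def quatTensorMatrix : (ℍ ⊗[ℝ] ℍ) ≃ₐ[ℝ] Matrix (Fin 4) (Fin 4) ℝ :=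
  (AlgEquiv.ofBijective quatPhi quatPhi_bijective).trans (algEquivMatrix quatBasis)

noncomputable def realMatTensor (m : ℕ) (X : Type) [Ring X] [Algebra ℝ X] :
    (Matrix (Fin m) (Fin m) ℝ ⊗[ℝ] X) ≃ₐ[ℝ] Matrix (Fin m) (Fin m) X :=
  (Algebra.TensorProduct.comm ℝ _ _).trans (matrixEquivTensor (Fin m) ℝ X).symm

noncomputable def matMat (m n : ℕ) (D : Type) [Ring D] [Algebra ℝ D] :
    (Matrix (Fin m) (Fin m) ℝ ⊗[ℝ] Matrix (Fin n) (Fin n) D)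
      ≃ₐ[ℝ] Matrix (Fin (m * n)) (Fin (m * n)) D :=
  (realMatTensor m _).trans ((Matrix.compAlgEquiv (Fin m) (Fin n) D ℝ).trans
    (Matrix.reindexAlgEquiv ℝ D finProdFinEquiv))

end More
end QuatAux

/-- If `A` and `B` are central simple `ℝ`-algebras, each isomorphic to a matrix algebra over
`ℝ` or over the Hamilton quaternions `ℍ`, then `A ⊗_ℝ B` is isomorphic to a matrix algebra
`Mₛ(ℝ)` or `Mₜ(ℍ)` for a suitable `s` or `t`. -/
theorem tensor_of_real_or_quaternionic_matrix_algebras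
    (A B : Type) [Ring A] [Algebra ℝ A] [Ring B] [Algebra ℝ B]
    [FiniteDimensional ℝ A] [Algebra.IsCentral ℝ A] [IsSimpleRing A]
    [FiniteDimensional ℝ B] [Algebra.IsCentral ℝ B] [IsSimpleRing B]
    (hA : (∃ n : ℕ, 0 < n ∧ Nonempty (A ≃ₐ[ℝ] Matrix (Fin n) (Fin n) ℝ)) ∨
          (∃ n : ℕ, 0 < n ∧ Nonempty (A ≃ₐ[ℝ] Matrix (Fin n) (Fin n) (Quaternion ℝ))))
    (hB : (∃ n : ℕ, 0 < n ∧ Nonempty (B ≃ₐ[ℝ] Matrix (Fin n) (Fin n) ℝ)) ∨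
          (∃ n : ℕ, 0 < n ∧ Nonempty (B ≃ₐ[ℝ] Matrix (Fin n) (Fin n) (Quaternion ℝ)))) :
    (∃ s : ℕ, 0 < s ∧ Nonempty ((A ⊗[ℝ] B) ≃ₐ[ℝ] Matrix (Fin s) (Fin s) ℝ)) ∨
    (∃ t : ℕ, 0 < t ∧ Nonempty ((A ⊗[ℝ] B) ≃ₐ[ℝ] Matrix (Fin t) (Fin t) (Quaternion ℝ))) := by
  rcases hA with ⟨m, hm, ⟨eA⟩⟩ | ⟨m, hm, ⟨eA⟩⟩ <;> rcases hB with ⟨n, hn, ⟨eB⟩⟩ | ⟨n, hn, ⟨eB⟩⟩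
  · exact Or.inl ⟨m * n, Nat.mul_pos hm hn,
      ⟨(Algebra.TensorProduct.congr eA eB).trans (matMat m n ℝ)⟩⟩
  · exact Or.inr ⟨m * n, Nat.mul_pos hm hn,
      ⟨(Algebra.TensorProduct.congr eA eB).trans (matMat m n (Quaternion ℝ))⟩⟩
  · exact Or.inr ⟨n * m, Nat.mul_pos hn hm,
      ⟨((Algebra.TensorProduct.congr eA eB).trans
        (Algebra.TensorProduct.comm ℝ _ _)).trans (matMat n m (Quaternion ℝ))⟩⟩
  · refine Or.inl ⟨4 * (m * n), by positivity, ⟨?_⟩⟩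
    refine (Algebra.TensorProduct.congr eA eB).trans ?_
    refine (Algebra.TensorProduct.congr
      (matrixEquivTensor (Fin m) ℝ (Quaternion ℝ))
      (matrixEquivTensor (Fin n) ℝ (Quaternion ℝ))).trans ?_
    refine (Algebra.TensorProduct.tensorTensorTensorComm ℝ ℝ ℝ ℝ _ _ _ _).trans ?_
    exact (Algebra.TensorProduct.congr quatTensorMatrix (matMat m n ℝ)).trans
      (matMat 4 (m * n) ℝ)
end

section
/- Let A be a central simple algebra over a field k. The generalized Brauer–Severi variety X_n (of rank-n right ideals of A) has a k-rational point if and only if the index ind(A) divides n. -/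
open Module TensorProduct DirectSum

section MatrixIdeals

variable {k : Type} [Field k] {D : Type} [DivisionRing D] [Algebra k D] {m : ℕ}

-- check the module instance smul
example (R : Type) [Ring R] (a : Rᵐᵒᵖ) (b : R) : a • b = b * a.unop :=
  MulOpposite.smul_eq_mul_unop a b

/-- The right ideal of matrices supported on the first `r` rows. -/
def rowIdeal (k D : Type) [Field k] [DivisionRing D] [Algebra k D] (m r : ℕ) : Submodule (Matrix (Fin m) (Fin m) D)ᵐᵒᵖ (Matrix (Fin m) (Fin m) D) where
  carrier := {X | ∀ i : Fin m, r ≤ (i : ℕ) → ∀ j, X i j = 0}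
  add_mem' := by
    intro a b ha hb i hi j
    show a i j + b i j = 0
    rw [ha i hi j, hb i hi j, add_zero]
  zero_mem' := by intro i hi j; rfl
  smul_mem' := by
    intro c X hX i hi j
    rw [MulOpposite.smul_eq_mul_unop, Matrix.mul_apply]
    exact Finset.sum_eq_zero fun p _ => by rw [hX i hi p, zero_mul]

lemma finrank_rowIdeal [FiniteDimensional k D] {r : ℕ} (hrm : r ≤ m) :
    finrank k ((rowIdeal k D m r).restrictScalars k) = r * (m * finrank k D) := by
  classical
  let L : ((rowIdeal k D m r).restrictScalars k) →ₗ[k] (Fin r → Fin m → D) :=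
    { toFun := fun X i j => (X : Matrix (Fin m) (Fin m) D) (Fin.castLE hrm i) j
      map_add' := fun X Y => rfl
      map_smul' := fun c X => rfl }
  have hbij : Function.Bijective L := by
    constructor
    · intro X Y h
      ext i j
      by_cases hi : (i : ℕ) < r
      · have := congrFun (congrFun h ⟨i, hi⟩) j
        exact this
      · rw [X.2 i (not_lt.1 hi) j, Y.2 i (not_lt.1 hi) j]
    · intro f
      refine ⟨⟨Matrix.of fun i j => if h : (i : ℕ) < r then f ⟨i, h⟩ j else 0, ?_⟩, ?_⟩
      · intro i hi j
        simp [Matrix.of_apply, not_lt.2 hi]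
      · ext i j
        change (if h : ((Fin.castLE hrm i : Fin m) : ℕ) < r then f ⟨_, h⟩ j else 0) = f i j
        simp
  rw [(LinearEquiv.ofBijective L hbij).finrank_eq]
  rw [finrank_pi_fintype, Finset.sum_const, Finset.card_univ, Fintype.card_fin, smul_eq_mul]
  congr 1
  rw [finrank_pi_fintype, Finset.sum_const, Finset.card_univ, Fintype.card_fin, smul_eq_mul]

end MatrixIdeals

section A1

variable {k : Type} [Field k] {D : Type} [DivisionRing D] [Algebra k D] {m : ℕ}

private def eOp (D : Type) [DivisionRing D] : D ≃ₗ[Dᵐᵒᵖ] Dᵐᵒᵖ where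
  toFun := MulOpposite.op
  invFun := MulOpposite.unop
  map_add' := fun x y => rfl
  map_smul' := fun a x => by
    simp only [RingHom.id_apply, MulOpposite.smul_eq_mul_unop, MulOpposite.op_mul,
      MulOpposite.op_unop, smul_eq_mul]
  left_inv := fun x => rfl
  right_inv := fun x => rfl

theorem exists_rank_of_rightIdeal [FiniteDimensional k D] (hm : 0 < m)
    (J : Submodule (Matrix (Fin m) (Fin m) D)ᵐᵒᵖ (Matrix (Fin m) (Fin m) D)) :
    ∃ r ≤ m, finrank k (J.restrictScalars k) = r * (m * finrank k D) := by
  classical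
  set z : Fin m := ⟨0, hm⟩ with hz
  set C : (Fin m → D) → Matrix (Fin m) (Fin m) D :=
    fun v => Matrix.of fun i j => if j = z then v i else 0 with hC
  have hCmul : ∀ (v : Fin m → D) (X : Matrix (Fin m) (Fin m) D) (i j : Fin m),
      (C v * X) i j = v i * X z j := by
    intro v X i j
    simp only [hC, Matrix.mul_apply, Matrix.of_apply, ite_mul, zero_mul]
    rw [Finset.sum_ite_eq' Finset.univ z (fun p => v i * X p j)]
    simp
  let W : Submodule Dᵐᵒᵖ (Fin m → D) :=
    { carrier := {v | C v ∈ J}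
      add_mem' := by
        intro a b ha hb
        have h : C (a + b) = C a + C b := by
          ext i j
          simp only [hC, Matrix.of_apply, Matrix.add_apply, Pi.add_apply]
          split <;> simp
        show C (a + b) ∈ J
        rw [h]; exact J.add_mem ha hb
      zero_mem' := by
        show C 0 ∈ J
        have h : C 0 = 0 := by ext i j; simp [hC]
        rw [h]; exact J.zero_mem
      smul_mem' := by
        intro d v hv
        show C (d • v) ∈ J
        have h : C (d • v) = C v * Matrix.single z z d.unop := by
          ext i j
          rw [hCmul]
          by_cases hj : j = z
          · subst hj
            simp [hC, Matrix.single, MulOpposite.smul_eq_mul_unop]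
          · simp [hC, Matrix.single, hj, show ¬ z = j from fun h => hj h.symm]
        rw [h]
        have := J.smul_mem (MulOpposite.op (Matrix.single z z d.unop)) hv
        rwa [MulOpposite.smul_eq_mul_unop, MulOpposite.unop_op] at this }
  have hcol : ∀ X ∈ J, ∀ j : Fin m, (fun i => X i j) ∈ W := by
    intro X hX j
    show C (fun i => X i j) ∈ J
    have h : C (fun i => X i j) = X * Matrix.single j z (1 : D) := by
      ext i l
      simp only [hC, Matrix.of_apply, Matrix.mul_apply, Matrix.single, Matrix.of_apply,
        mul_ite, mul_one, mul_zero]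
      by_cases hl : l = z
      · subst hl
        simp
      · simp [hl, show ¬ z = l from fun h => hl h.symm]
    rw [h]
    have := J.smul_mem (MulOpposite.op (Matrix.single j z (1 : D))) hX
    rwa [MulOpposite.smul_eq_mul_unop, MulOpposite.unop_op] at this
  have hrecon : ∀ X : Matrix (Fin m) (Fin m) D, (∀ j : Fin m, (fun i => X i j) ∈ W) → X ∈ J := by
    intro X hX
    have h : X = ∑ j : Fin m, C (fun i => X i j) * Matrix.single z j (1 : D) := by
      ext i l
      rw [Matrix.sum_apply]
      have : ∀ j : Fin m, (C (fun i => X i j) * Matrix.single z j (1:D)) i l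
          = if j = l then X i j else 0 := by
        intro j
        rw [hCmul]
        simp [Matrix.single, and_comm]
      simp_rw [this]
      simp
    rw [h]
    refine Submodule.sum_mem _ fun j _ => ?_
    have := J.smul_mem (MulOpposite.op (Matrix.single z j (1 : D))) (hX j)
    rwa [MulOpposite.smul_eq_mul_unop, MulOpposite.unop_op] at this
  -- the k-linear equivalence between J and (Fin m → W)
  let E : (J.restrictScalars k) ≃ₗ[k] (Fin m → (W.restrictScalars k)) :=
    { toFun := fun X j => ⟨fun i => X.1 i j, hcol X.1 X.2 j⟩
      invFun := fun f => ⟨Matrix.of fun i j => (f j).1 i, hrecon _ (fun j => (f j).2)⟩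
      map_add' := fun X Y => by ext j i; rfl
      map_smul' := fun c X => by ext j i; rfl
      left_inv := fun X => by ext i j; rfl
      right_inv := fun f => by ext j i; rfl }
  -- dimension counts
  letI : Module.Finite Dᵐᵒᵖ (Fin m → D) :=
    Module.Finite.equiv (LinearEquiv.piCongrRight fun _ : Fin m => (eOp D)).symm
  have hWm : finrank Dᵐᵒᵖ (Fin m → D) = m := by
    rw [(LinearEquiv.piCongrRight fun _ : Fin m => (eOp D)).finrank_eq, finrank_pi,
      Fintype.card_fin]
  refine ⟨finrank Dᵐᵒᵖ W, le_trans (Submodule.finrank_le W) (le_of_eq hWm), ?_⟩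
  have h1 : finrank k (J.restrictScalars k) = m * finrank k (W.restrictScalars k) := by
    rw [E.finrank_eq, finrank_pi_fintype, Finset.sum_const, Finset.card_univ, Fintype.card_fin,
      smul_eq_mul]
  have h2 : finrank k (W.restrictScalars k) = finrank k ↥W :=
    ((Submodule.restrictScalarsEquiv k Dᵐᵒᵖ (Fin m → D) W).restrictScalars k).finrank_eq
  have h3 : finrank k Dᵐᵒᵖ * finrank Dᵐᵒᵖ ↥W = finrank k ↥W :=
    finrank_mul_finrank k Dᵐᵒᵖ ↥W
  have h4 : finrank k Dᵐᵒᵖ = finrank k D := (MulOpposite.opLinearEquiv k : D ≃ₗ[k] Dᵐᵒᵖ).finrank_eq.symm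
  rw [h1, h2, ← h3, h4]
  ring

end A1

theorem transfer_ideal {k A M : Type} [Field k] [Ring A] [Ring M] [Algebra k A] [Algebra k M]
    (ψ : A ≃ₐ[k] M) (I : Submodule Aᵐᵒᵖ A) :
    ∃ J : Submodule Mᵐᵒᵖ M,
      finrank k (J.restrictScalars k) = finrank k (I.restrictScalars k) := by
  let J : Submodule Mᵐᵒᵖ M :=
    { carrier := ψ '' I
      add_mem' := by
        rintro _ _ ⟨x, hx, rfl⟩ ⟨y, hy, rfl⟩
        exact ⟨x + y, I.add_mem hx hy, map_add ψ x y⟩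
      zero_mem' := ⟨0, I.zero_mem, map_zero ψ⟩
      smul_mem' := by
        rintro c _ ⟨x, hx, rfl⟩
        refine ⟨x * ψ.symm c.unop, ?_, ?_⟩
        · have := I.smul_mem (MulOpposite.op (ψ.symm c.unop)) hx
          rwa [MulOpposite.smul_eq_mul_unop, MulOpposite.unop_op] at this
        · rw [MulOpposite.smul_eq_mul_unop, map_mul, AlgEquiv.apply_symm_apply] }
  refine ⟨J, ?_⟩
  have hmap : J.restrictScalars k
      = Submodule.map (ψ.toLinearMap : A →ₗ[k] M) (I.restrictScalars k) := by
    ext x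
    exact Iff.symm Submodule.mem_map
  rw [hmap]
  exact ((I.restrictScalars k).equivMapOfInjective ψ.toLinearMap ψ.injective).finrank_eq.symm

theorem tensor_simple (k : Type) [Field k] (K : Type) [Field K] [Algebra k K]
    (D : Type) [DivisionRing D] [Algebra k D] [Algebra.IsCentral k D] :
    IsSimpleRing (K ⊗[k] D) := by
  classical
  let b := Basis.ofVectorSpace k K
  set ι := Basis.ofVectorSpaceIndex k K
  let c : (K ⊗[k] D) ≃ₗ[k] (ι →₀ D) :=
    (TensorProduct.congr b.repr (LinearEquiv.refl k D)).trans
      (TensorProduct.finsuppScalarLeft k D ι)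
  have hc_tmul : ∀ (t : K) (d : D) (i : ι), c (t ⊗ₜ[k] d) i = b.repr t i • d := by
    intro t d i
    simp [c, TensorProduct.finsuppScalarLeft_apply_tmul_apply]
  have hmulr : ∀ (x : K ⊗[k] D) (d : D) (i : ι), c (x * (1 ⊗ₜ[k] d)) i = c x i * d := by
    intro x d i
    induction x using TensorProduct.induction_on with
    | zero => simp
    | tmul t e =>
        rw [Algebra.TensorProduct.tmul_mul_tmul, mul_one, hc_tmul, hc_tmul, smul_mul_assoc]
    | add x y hx hy => rw [add_mul, map_add, Finsupp.add_apply, hx, hy, map_add,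
        Finsupp.add_apply, add_mul]
  have hmull : ∀ (x : K ⊗[k] D) (d : D) (i : ι), c ((1 ⊗ₜ[k] d) * x) i = d * c x i := by
    intro x d i
    induction x using TensorProduct.induction_on with
    | zero => simp
    | tmul t e =>
        rw [Algebra.TensorProduct.tmul_mul_tmul, one_mul, hc_tmul, hc_tmul, mul_smul_comm]
    | add x y hx hy => rw [mul_add, map_add, Finsupp.add_apply, hx, hy, map_add,
        Finsupp.add_apply, mul_add]
  haveI : Nonempty ι := b.index_nonempty
  haveI : Nontrivial (K ⊗[k] D) := c.toEquiv.nontrivial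
  refine ⟨{ eq_bot_or_eq_top := fun I => ?_ }⟩
  by_cases hI : I = ⊥
  · exact Or.inl hI
  right
  have hex : ∃ x, x ∈ I ∧ x ≠ 0 := by
    by_contra hc'
    push_neg at hc'
    exact hI (by
      ext x
      rw [TwoSidedIdeal.mem_bot]
      exact ⟨fun hx => hc' x hx, fun e => e ▸ I.zero_mem⟩)
  have hP : ∃ n, ∃ x, x ∈ I ∧ x ≠ 0 ∧ (c x).support.card = n := by
    obtain ⟨x, hx, h0⟩ := hex
    exact ⟨_, x, hx, h0, rfl⟩
  set n₀ := Nat.find hP with hn₀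
  obtain ⟨x, hxI, hx0, hxcard⟩ := Nat.find_spec hP
  have hcx : c x ≠ 0 := fun h => hx0 (by simpa using c.map_eq_zero_iff.1 (by simpa using h))
  obtain ⟨i₀, hi₀⟩ := Finsupp.support_nonempty_iff.2 hcx
  have hd₀ : c x i₀ ≠ 0 := Finsupp.mem_support_iff.1 hi₀
  set x' := x * (1 ⊗ₜ[k] (c x i₀)⁻¹) with hx'
  have hx'I : x' ∈ I := I.mul_mem_right _ _ hxI
  have hcx' : ∀ i, c x' i = c x i * (c x i₀)⁻¹ := fun i => hmulr x _ i
  have hsupp' : (c x').support = (c x).support := by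
    ext i
    simp only [Finsupp.mem_support_iff, hcx']
    constructor
    · intro h h'; exact h (by rw [h', zero_mul])
    · intro h h'
      exact h (by
        have := congrArg (· * (c x i₀)) h'
        simpa [mul_assoc, inv_mul_cancel₀ hd₀] using this)
  have hone : c x' i₀ = 1 := by rw [hcx', mul_inv_cancel₀ hd₀]
  have hx'0 : x' ≠ 0 := fun h => by
    have : c x' i₀ = 0 := by rw [h, map_zero]; rfl
    rw [hone] at this; exact one_ne_zero this
  have hcomm : ∀ (d : D) (i : ι), d * c x' i = c x' i * d := by
    intro d i
    set y := (1 ⊗ₜ[k] d) * x' - x' * (1 ⊗ₜ[k] d) with hy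
    have hyI : y ∈ I := I.sub_mem (I.mul_mem_left _ _ hx'I) (I.mul_mem_right _ _ hx'I)
    have hcy : ∀ j, c y j = d * c x' j - c x' j * d := by
      intro j
      have h1 := hmull x' d j
      have h2 := hmulr x' d j
      rw [hy, map_sub, Finsupp.sub_apply, h1, h2]
    have hy0 : y = 0 := by
      by_contra hy0
      have hsub : (c y).support ⊆ (c x').support.erase i₀ := by
        intro j hj
        have hcyj : c y j ≠ 0 := Finsupp.mem_support_iff.1 hj
        rw [Finset.mem_erase]
        constructor
        · intro hji
          apply hcyj
          rw [hji, hcy, hone, mul_one, one_mul, sub_self]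
        · rw [Finsupp.mem_support_iff]
          intro h0
          apply hcyj
          rw [hcy, h0, mul_zero, zero_mul, sub_self]
      have hlt : (c y).support.card < n₀ := by
        have h1 : (c y).support.card ≤ ((c x').support.erase i₀).card :=
          Finset.card_le_card hsub
        have h2 : ((c x').support.erase i₀).card < (c x').support.card :=
          Finset.card_erase_lt_of_mem (by rw [hsupp']; exact hi₀)
        have h3 : (c x').support.card = n₀ := by rw [hsupp', hxcard]
        omega
      exact Nat.find_min hP hlt ⟨y, hyI, hy0, rfl⟩
    have := hcy i
    rw [hy0, map_zero] at this
    have : (0 : ι →₀ D) i = d * c x' i - c x' i * d := this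
    rw [Finsupp.coe_zero, Pi.zero_apply] at this
    exact sub_eq_zero.1 this.symm
  have hcenter : ∀ i, ∃ t : k, algebraMap k D t = c x' i := by
    intro i
    have h1 : c x' i ∈ Subalgebra.center k D := Subalgebra.mem_center_iff.2 fun d => (hcomm d i).symm ▸ rfl
    have h2 := Algebra.IsCentral.out (K := k) (D := D) h1
    rw [Algebra.mem_bot] at h2
    obtain ⟨t, ht⟩ := h2
    exact ⟨t, ht⟩
  choose t ht using hcenter
  set u : K := ∑ i ∈ (c x').support, t i • (b i : K) with hu
  have hxu : x' = u ⊗ₜ[k] 1 := by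
    apply c.injective
    ext i
    have hrep : b.repr u = ∑ j ∈ (c x').support, Finsupp.single j (t j) := by
      rw [hu, map_sum]
      refine Finset.sum_congr rfl fun j _ => ?_
      rw [map_smul, b.repr_self, Finsupp.smul_single, smul_eq_mul, mul_one]
    have hrepi : b.repr u i = if i ∈ (c x').support then t i else 0 := by
      rw [hrep]
      rw [Finset.sum_apply']
      simp_rw [Finsupp.single_apply]
      rw [Finset.sum_ite_eq' (c x').support i t]
    rw [hc_tmul, hrepi]
    by_cases hmem : i ∈ (c x').support
    · rw [if_pos hmem]
      rw [← ht i, Algebra.algebraMap_eq_smul_one]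
    · rw [if_neg hmem]
      rw [zero_smul]
      exact Finsupp.notMem_support_iff.1 hmem
  have hu0 : u ≠ 0 := by
    intro h
    apply hx'0
    rw [hxu, h, TensorProduct.zero_tmul]
  have hone_mem : (1 : K ⊗[k] D) ∈ I := by
    have : (u⁻¹ ⊗ₜ[k] (1:D)) * x' ∈ I := I.mul_mem_left _ _ hx'I
    rw [hxu, Algebra.TensorProduct.tmul_mul_tmul, inv_mul_cancel₀ hu0, one_mul] at this
    rwa [Algebra.TensorProduct.one_def]
  exact (TwoSidedIdeal.one_mem_iff I).1 hone_mem

section SQ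

variable {B : Type} [Ring B]

/-- Right multiplication as a `B`-linear endomorphism of `B`. -/
private def rmul (b : B) : B →ₗ[B] B where
  toFun x := x * b
  map_add' x y := add_mul x y b
  map_smul' a x := mul_assoc a x b

private lemma rmul_apply (b x : B) : rmul b x = x * b := rfl

/-- A left ideal closed under right multiplication in a simple ring is `⊥` or `⊤`. -/
private lemma submodule_eq_top [IsSimpleRing B] {T : Submodule B B} (hT : T ≠ ⊥)
    (hmul : ∀ c : B, Submodule.map (rmul c) T ≤ T) : T = ⊤ := by
  let T' : TwoSidedIdeal B := TwoSidedIdeal.mk' T T.zero_mem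
    (fun hx hy => T.add_mem hx hy) (fun hx => T.neg_mem hx)
    (fun {x y} hy => by simpa [smul_eq_mul] using T.smul_mem x hy)
    (fun {x y} hx => hmul y ⟨x, hx, rfl⟩)
  have hmem : ∀ x : B, x ∈ T' ↔ x ∈ T := fun x => TwoSidedIdeal.mem_mk' _ _ _ _ _ _ x
  rcases IsSimpleOrder.eq_bot_or_eq_top T' with h | h
  · exfalso
    apply hT
    ext x
    simp only [Submodule.mem_bot]
    constructor
    · intro hx
      have : x ∈ T' := (hmem x).2 hx
      rw [h] at this
      exact (TwoSidedIdeal.mem_bot B).1 this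
    · rintro rfl; exact T.zero_mem
  · ext x
    simp only [Submodule.mem_top, iff_true]
    have : x ∈ T' := by rw [h]; trivial
    exact (hmem x).1 this

variable (K : Type) [Field K] [Algebra K B]

private lemma semisimple_of_simple [FiniteDimensional K B] [IsSimpleRing B] :
    IsSemisimpleRing B := by
  haveI hArt : IsArtinian B B := isArtinian_of_tower K inferInstance
  set T := sSup {m : Submodule B B | IsSimpleModule B m} with hT
  have hmul : ∀ c : B, Submodule.map (rmul c) T ≤ T := by
    intro c
    rw [hT, sSup_eq_iSup', Submodule.map_iSup]
    refine iSup_le fun N => ?_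
    haveI hNs : IsSimpleModule B ↥(N : Submodule B B) := N.2
    set g : ↥(N : Submodule B B) →ₗ[B] B := (rmul c).comp (N : Submodule B B).subtype with hg
    have hrange : LinearMap.range g = Submodule.map (rmul c) (N : Submodule B B) := by
      rw [hg, LinearMap.range_comp, Submodule.range_subtype]
    rcases eq_bot_or_eq_top (LinearMap.ker g) with hker | hker
    · have hinj : Function.Injective g := LinearMap.ker_eq_bot.1 hker
      have : IsSimpleModule B ↥(LinearMap.range g) :=
        IsSimpleModule.congr (LinearEquiv.ofInjective g hinj).symm
      rw [← hrange, ← sSup_eq_iSup']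
      exact le_sSup this
    · have : g = 0 := LinearMap.ker_eq_top.1 hker
      rw [← hrange, this, LinearMap.range_zero]
      exact bot_le
  have hTne : T ≠ ⊥ := by
    haveI : IsAtomic (Submodule B B) := inferInstance
    rcases IsAtomic.eq_bot_or_exists_atom_le (⊤ : Submodule B B) with h | ⟨a, ha, _⟩
    · exfalso
      haveI : Nontrivial B := inferInstance
      obtain ⟨x, hx⟩ := exists_ne (0 : B)
      have : x ∈ (⊤ : Submodule B B) := trivial
      rw [h] at this
      exact hx (Submodule.mem_bot B |>.1 this)
    · have hs : IsSimpleModule B ↥a := isSimpleModule_iff_isAtom.2 ha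
      have : a ≤ T := le_sSup hs
      intro h
      rw [h, le_bot_iff] at this
      exact ha.1 this
  have := submodule_eq_top hTne hmul
  exact IsSemisimpleModule.of_sSup_simples_eq_top this

/-- In a simple ring, any two simple submodules are isomorphic. -/
private lemma simple_submodules_iso [FiniteDimensional K B] [IsSimpleRing B]
    (N S : Submodule B B) (hN : IsSimpleModule B N) (hS : IsSimpleModule B S) :
    Nonempty (↥N ≃ₗ[B] ↥S) := by
  haveI := semisimple_of_simple K (B := B)
  haveI := hN; haveI := hS
  set T := ⨆ b : B, Submodule.map (rmul b) N with hT
  have hmul : ∀ c : B, Submodule.map (rmul c) T ≤ T := by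
    intro c
    rw [hT, Submodule.map_iSup]
    refine iSup_le fun b => ?_
    rw [← Submodule.map_comp]
    have hcomp : (rmul c).comp (rmul b) = rmul (b * c) := by
      ext x; simp [rmul_apply, mul_assoc]
    rw [hcomp]
    exact le_iSup (fun b => Submodule.map (rmul b) N) (b * c)
  have hTne : T ≠ ⊥ := by
    have h1 : N ≤ T := by
      have heq : Submodule.map (rmul 1) N = N := by
        ext x
        simp [Submodule.mem_map, rmul_apply]
      exact heq.symm.le.trans (le_iSup (fun b => Submodule.map (rmul b) N) 1)
    intro h
    rw [h, le_bot_iff] at h1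
    haveI := IsSimpleModule.nontrivial B ↥N
    obtain ⟨x, hx⟩ := exists_ne (0 : ↥N)
    apply hx
    have : (x : B) ∈ (⊥ : Submodule B B) := h1 ▸ x.2
    exact Subtype.ext ((Submodule.mem_bot B).1 this)
  have hTtop : T = ⊤ := submodule_eq_top hTne hmul
  obtain ⟨C, hC⟩ := exists_isCompl S
  set π := S.projectionOnto C hC with hπ
  have hexb : ∃ b : B, ∃ x : ↥N, π ((x : B) * b) ≠ 0 := by
    by_contra h
    push_neg at h
    have hker : T ≤ LinearMap.ker π := by
      rw [hT]
      refine iSup_le fun b => ?_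
      rintro _ ⟨x, hx, rfl⟩
      exact LinearMap.mem_ker.2 (h b ⟨x, hx⟩)
    haveI := IsSimpleModule.nontrivial B ↥S
    obtain ⟨y, hy⟩ := exists_ne (0 : ↥S)
    apply hy
    have hmem : (y : B) ∈ T := by rw [hTtop]; trivial
    have : π (y : B) = 0 := hker hmem
    rwa [Submodule.projectionOnto_apply_left hC y] at this
  obtain ⟨b, x₀, hb⟩ := hexb
  set f : ↥N →ₗ[B] ↥S := (π.comp (rmul b)).comp N.subtype with hf
  have hf0 : f ≠ 0 := by
    intro h
    apply hb
    have : f x₀ = 0 := by rw [h]; rfl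
    simpa [hf, rmul_apply] using this
  exact ⟨LinearEquiv.ofBijective f (f.bijective_of_ne_zero hf0)⟩

end SQ

section Count

variable {K B : Type} [Field K] [Ring B] [Algebra K B]

/-- Composing with a `B`-linear equivalence on domains gives a `K`-linear equivalence of hom
spaces. -/
private def homCongrDom {M₁ M₂ S : Type} [AddCommGroup M₁] [AddCommGroup M₂] [AddCommGroup S]
    [Module B M₁] [Module B M₂] [Module B S] [Module K S] [SMulCommClass B K S]
    (e : M₁ ≃ₗ[B] M₂) : (M₁ →ₗ[B] S) ≃ₗ[K] (M₂ →ₗ[B] S) where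
  toFun f := f.comp e.symm.toLinearMap
  invFun g := g.comp e.toLinearMap
  map_add' f g := by ext x; rfl
  map_smul' c f := by ext x; rfl
  left_inv f := by ext x; simp
  right_inv g := by ext x; simp

theorem finrank_isSquare_of_simple [IsAlgClosed K] [FiniteDimensional K B] [IsSimpleRing B] :
    IsSquare (finrank K B) := by
  classical
  haveI := semisimple_of_simple K (B := B)
  -- instances for submodules
  letI instFD : ∀ N : Submodule B B, FiniteDimensional K ↥N := fun N =>
    FiniteDimensional.of_injective (N.subtype.restrictScalars K) N.injective_subtype
  letI instSC : ∀ (M : Type) [AddCommGroup M] [Module B M] [Module K M]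
      [IsScalarTower K B M], SMulCommClass B K M := fun M _ _ _ _ =>
    ⟨fun b c x => by
      calc b • c • x = b • (algebraMap K B c) • x := by rw [algebra_compatible_smul B c x]
        _ = (b * algebraMap K B c) • x := by rw [mul_smul]
        _ = (algebraMap K B c * b) • x := by rw [Algebra.commutes]
        _ = algebraMap K B c • b • x := by rw [mul_smul]
        _ = c • b • x := by rw [← algebra_compatible_smul B c (b • x)]⟩
  -- Schur's lemma over an algebraically closed field
  have schur : ∀ (S : Submodule B B), IsSimpleModule B ↥S →
      (∀ φ : (↥S →ₗ[B] ↥S), ∃ c : K, c • LinearMap.id = φ) := by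
    intro S hS φ
    haveI := hS
    haveI := IsSimpleModule.nontrivial B ↥S
    let ψ : Module.End K ↥S :=
      { toFun := φ
        map_add' := φ.map_add
        map_smul' := fun c x => by
          simp only [RingHom.id_apply]
          rw [algebra_compatible_smul B c x, φ.map_smul, ← algebra_compatible_smul] }
    obtain ⟨c, hc⟩ := Module.End.exists_eigenvalue ψ
    obtain ⟨v, hv⟩ := hc.exists_hasEigenvector
    refine ⟨c, ?_⟩
    set θ : ↥S →ₗ[B] ↥S := φ - c • LinearMap.id with hθ
    have hθv : θ v = 0 := by
      have h1 : ψ v = c • v := hv.apply_eq_smul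
      have : φ v = c • v := h1
      simp [hθ, this]
    rcases θ.injective_or_eq_zero with hinj | h0
    · exfalso
      exact hv.2 (hinj (by rw [hθv, map_zero]))
    · have : φ - c • LinearMap.id = 0 := h0
      rw [sub_eq_zero] at this
      exact this.symm
  -- decomposition of B into simple submodules
  obtain ⟨sfam, hind, hsup, hsimp⟩ := IsSemisimpleModule.exists_sSupIndep_sSup_simples_eq_top B B
  have hfin : sfam.Finite := WellFoundedGT.finite_of_sSupIndep hind
  letI := hfin.fintype
  have hInd : iSupIndep (fun i : sfam => (i : Submodule B B)) := (sSupIndep_iff sfam).1 hind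
  have hSup : ⨆ i : sfam, (i : Submodule B B) = ⊤ := by rw [← sSup_eq_iSup']; exact hsup
  have hint : DirectSum.IsInternal (fun i : sfam => (i : Submodule B B)) :=
    DirectSum.isInternal_submodule_of_iSupIndep_of_iSup_eq_top hInd hSup
  let e1 : (⨁ (i : sfam), ↥(i : Submodule B B)) ≃ₗ[B] B :=
    LinearEquiv.ofBijective (DirectSum.coeLinearMap _) hint
  let e2 := DirectSum.linearEquivFunOnFintype B sfam (fun i : sfam => ↥(i : Submodule B B))
  let E : B ≃ₗ[B] (∀ i : sfam, ↥(i : Submodule B B)) := e1.symm.trans e2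
  -- sfam is nonempty
  have hne : sfam.Nonempty := by
    by_contra h
    rw [Set.not_nonempty_iff_eq_empty] at h
    rw [h, sSup_empty] at hsup
    haveI : Nontrivial B := inferInstance
    obtain ⟨x, hx⟩ := exists_ne (0 : B)
    have : x ∈ (⊤ : Submodule B B) := trivial
    rw [← hsup] at this
    exact hx ((Submodule.mem_bot B).1 this)
  obtain ⟨S₀, hS₀⟩ := hne
  haveI hS₀s : IsSimpleModule B ↥S₀ := hsimp S₀ hS₀
  haveI := IsSimpleModule.nontrivial B ↥S₀
  set s := finrank K ↥S₀ with hs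
  -- each member has dimension s
  have hdim : ∀ i : sfam, finrank K ↥(i : Submodule B B) = s := by
    intro i
    obtain ⟨e⟩ := simple_submodules_iso K (i : Submodule B B) S₀ (hsimp _ i.2) hS₀s
    exact (e.restrictScalars K).finrank_eq
  have hq1 : finrank K B = (Fintype.card sfam) * s := by
    rw [(E.restrictScalars K).finrank_eq, finrank_pi_fintype]
    simp only [hdim]
    rw [Finset.sum_const, Finset.card_univ, smul_eq_mul]
  -- the endomorphism algebra of S₀ is K
  have hEnd1 : finrank K (↥S₀ →ₗ[B] ↥S₀) = 1 := by
    refine finrank_eq_one LinearMap.id ?_ (fun w => schur S₀ hS₀s w)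
    intro h
    obtain ⟨x, hx⟩ := exists_ne (0 : ↥S₀)
    exact hx (by rw [← LinearMap.id_apply (R := B) x, h]; rfl)
  haveI hEndFin : Module.Finite K (↥S₀ →ₗ[B] ↥S₀) := by
    refine ⟨⟨{LinearMap.id}, ?_⟩⟩
    rw [eq_top_iff]
    intro w _
    obtain ⟨c, hc⟩ := schur S₀ hS₀s w
    simp only [Finset.coe_singleton]
    rw [← hc]
    exact Submodule.smul_mem _ _ (Submodule.mem_span_singleton_self _)
  -- Hom spaces from members to S₀
  have hhomdim : ∀ i : sfam, finrank K (↥(i : Submodule B B) →ₗ[B] ↥S₀) = 1 := by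
    intro i
    obtain ⟨e⟩ := simple_submodules_iso K (i : Submodule B B) S₀ (hsimp _ i.2) hS₀s
    rw [(homCongrDom (K := K) e.symm : _ ≃ₗ[K] _).symm.finrank_eq]
    exact hEnd1
  haveI hhomfin : ∀ i : sfam, Module.Finite K (↥(i : Submodule B B) →ₗ[B] ↥S₀) := by
    intro i
    obtain ⟨e⟩ := simple_submodules_iso K (i : Submodule B B) S₀ (hsimp _ i.2) hS₀s
    exact Module.Finite.equiv (homCongrDom (K := K) e.symm : _ ≃ₗ[K] _)
  -- count Hom(B, S₀) two ways
  have hhom1 : finrank K (B →ₗ[B] ↥S₀) = s :=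
    (LinearMap.ringLmapEquivSelf B K ↥S₀).finrank_eq
  have hhom2 : finrank K (B →ₗ[B] ↥S₀) = Fintype.card sfam := by
    have e3 : (B →ₗ[B] ↥S₀) ≃ₗ[K] ((∀ i : sfam, ↥(i : Submodule B B)) →ₗ[B] ↥S₀) :=
      homCongrDom (K := K) E
    have e4 : (∀ i : sfam, (↥(i : Submodule B B) →ₗ[B] ↥S₀)) ≃ₗ[K]
        ((∀ i : sfam, ↥(i : Submodule B B)) →ₗ[B] ↥S₀) :=
      LinearMap.lsum B (fun i : sfam => ↥(i : Submodule B B)) K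
    rw [e3.finrank_eq, ← e4.finrank_eq, finrank_pi_fintype]
    simp only [hhomdim]
    rw [Finset.sum_const, Finset.card_univ, smul_eq_mul, mul_one]
  have hcard : Fintype.card sfam = s := by rw [← hhom2, hhom1]
  exact ⟨s, by rw [hq1, hcard]⟩

end Count

/-- Let `A` be a central simple algebra over a field `k` of degree `d = √dimₖ A`, and let
`D` be the division algebra with `A ≅ Mₘ(D)` (Wedderburn), so that `ind(A) = √dimₖ D`.
For `1 ≤ n ≤ d`, the generalized Brauer–Severi variety `X_n` — whose `k`-points are the
right ideals of `A` of `k`-dimension `n · d` — has a `k`-rational point if and only if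
`ind(A)` divides `n` (Knus–Merkurjev–Rost, Proposition 1.17).
(Right ideals of `A` are the `Aᵐᵒᵖ`-submodules of `A`.) -/
theorem generalized_brauer_severi_has_point_iff_index_dvd
    (k : Type) [Field k] (A : Type) [Ring A] [Algebra k A] [FiniteDimensional k A]
    [Algebra.IsCentral k A] [IsSimpleRing A]
    (D : Type) [DivisionRing D] [Algebra k D]
    (m : ℕ) (hm : 0 < m) (hA : Nonempty (A ≃ₐ[k] Matrix (Fin m) (Fin m) D))
    (n : ℕ) (hn : 1 ≤ n) (hnd : n ≤ Nat.sqrt (Module.finrank k A)) :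
    (∃ I : Submodule Aᵐᵒᵖ A,
        Module.finrank k (I.restrictScalars k) = n * Nat.sqrt (Module.finrank k A)) ↔
    Nat.sqrt (Module.finrank k D) ∣ n := by
  classical
  obtain ⟨φ⟩ := hA
  haveI : FiniteDimensional k (Matrix (Fin m) (Fin m) D) :=
    Module.Finite.equiv φ.toLinearEquiv
  set z : Fin m := ⟨0, hm⟩ with hz
  haveI hDfin : FiniteDimensional k D := by
    let f : D →ₗ[k] Matrix (Fin m) (Fin m) D :=
      { toFun := fun d => Matrix.single z z d
        map_add' := fun x y => Matrix.single_add z z x y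
        map_smul' := fun c x => (Matrix.smul_single c z z x).symm }
    refine FiniteDimensional.of_injective f (fun a b h => ?_)
    have := congrFun (congrFun (congrArg (fun M => (M : Matrix (Fin m) (Fin m) D)) h) z) z
    simpa [f, Matrix.single] using this
  haveI hDcen : Algebra.IsCentral k D := by
    constructor
    intro x hx
    set X := Matrix.diagonal (fun _ : Fin m => x) with hX
    have hcomm : ∀ Y : Matrix (Fin m) (Fin m) D, X * Y = Y * X := by
      intro Y
      have : Commute ((Matrix.scalar (Fin m)) x) Y :=
        Matrix.scalar_commute x (fun d => (Subalgebra.mem_center_iff.1 hx d).symm) Y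
      exact this.eq
    set a := φ.symm X with ha
    have hacen : a ∈ Subalgebra.center k A := by
      refine Subalgebra.mem_center_iff.2 fun w => ?_
      apply φ.injective
      rw [map_mul, map_mul, ha, AlgEquiv.apply_symm_apply]
      exact (hcomm (φ w)).symm
    have hbot := Algebra.IsCentral.out (K := k) (D := A) hacen
    rw [Algebra.mem_bot] at hbot
    obtain ⟨t, ht⟩ := hbot
    have hXmap : X = algebraMap k (Matrix (Fin m) (Fin m) D) t := by
      rw [← AlgEquiv.apply_symm_apply φ X, ← ha, ← ht, AlgEquiv.commutes]
    have hxt : x = algebraMap k D t := by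
      have := congrFun (congrFun (congrArg (fun M => (M : Matrix (Fin m) (Fin m) D)) hXmap) z) z
      simpa [hX, Matrix.algebraMap_eq_diagonal] using this
    exact Algebra.mem_bot.2 ⟨t, hxt.symm⟩
  set q := Module.finrank k D with hq
  have hsq : IsSquare q := by
    haveI : IsSimpleRing ((AlgebraicClosure k) ⊗[k] D) := tensor_simple k (AlgebraicClosure k) D
    have := finrank_isSquare_of_simple (K := AlgebraicClosure k)
      (B := (AlgebraicClosure k) ⊗[k] D)
    rwa [Module.finrank_baseChange] at this
  obtain ⟨e, he⟩ := hsq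
  have hq0 : 0 < q := Module.finrank_pos
  have he1 : 1 ≤ e := by
    rcases Nat.eq_zero_or_pos e with h | h
    · rw [h, mul_zero] at he; omega
    · exact h
  have hdA : Module.finrank k A = (m * e) ^ 2 := by
    rw [φ.toLinearEquiv.finrank_eq, finrank_matrix, Fintype.card_fin, ← hq, he]
    ring
  have hd : Nat.sqrt (Module.finrank k A) = m * e := by rw [hdA, Nat.sqrt_eq']
  have hsq' : Nat.sqrt q = e := by
    rw [he, show e * e = e ^ 2 by ring, Nat.sqrt_eq']
  rw [hd] at hnd
  rw [hd, hsq']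
  constructor
  · rintro ⟨I, hI⟩
    obtain ⟨J, hJ⟩ := transfer_ideal φ I
    obtain ⟨r, hrm, hJr⟩ := exists_rank_of_rightIdeal (k := k) hm J
    rw [hI] at hJ
    rw [hJr] at hJ
    rw [← hq, he] at hJ
    have h2 : (r * e) * (m * e) = n * (m * e) := by
      rw [← hJ]; ring
    have h3 : r * e = n := Nat.eq_of_mul_eq_mul_right (Nat.mul_pos hm he1) h2
    exact ⟨r, by rw [← h3]; ring⟩
  · rintro ⟨t, rfl⟩
    have htm : t ≤ m := by
      rw [mul_comm m e] at hnd
      exact Nat.le_of_mul_le_mul_left hnd he1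
    obtain ⟨I, hI⟩ := transfer_ideal φ.symm (rowIdeal k D m t)
    refine ⟨I, ?_⟩
    rw [hI, finrank_rowIdeal htm, ← hq, he]
    ring
end
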